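/- arXiv:1206.4164 — 4 statements merged into one kernel-verified Lean document; each statement's English description precedes it below -/
import Mathlib

section
/- Let (V, d) be a finite metric space with integer-valued distances, n a positive natural number, k a positive integer, and ε > 0. Suppose D : V × V → ℝ satisfies d(v1, v2) ≤ D(v1, v2) ≤ (2k − 1) · d(v1, v2) for all v1, v2, and τ : V × V → ℕ satisfies τ(v1, v2) ≥ d(v1, v2) for all v1, v2 and τ(v1, v2) = d(v1, v2) whenever d(v1, v2) ≥ ε·n / (2k − 1). Define A(v1, v2) to be τ(v1, v2) if D(v1, v2) ≥ ε·n and τ(v1, v2) ≥ ε·n, and ⊥ (no answer) otherwise. Then for all v1, v2 ∈ V: if d(v1, v2) < ε·n then A(v1, v2) = ⊥, and if d(v1, v2) ≥ ε·n then A(v1, v2) = d(v1, v2). -/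
/-- Let `(V, d)` be a finite metric space with natural-number distances, `n` a positive natural
number, `k ≥ 1`, `ε > 0`. Suppose `D` is a `(2k−1)`-stretch distance oracle,
i.e. `d ≤ D ≤ (2k−1)·d`, and `τ` never underestimates `d` and is exact on pairs with
`d ≥ ε·n/(2k−1)`. Define `A(v1, v2)` to be `some (τ(v1, v2))` if both `D(v1, v2) ≥ ε·n` and
`τ(v1, v2) ≥ ε·n`, and `none` otherwise. Then for all `v1, v2`: if `d(v1, v2) < ε·n` then
`A(v1, v2) = none`, and if `d(v1, v2) ≥ ε·n` then `A(v1, v2) = some (d(v1, v2))`. -/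
theorem combined_oracle_answers {V : Type*} [Fintype V]
    (d : V → V → ℕ)
    (hd_self : ∀ v, d v v = 0)
    (hd_eq : ∀ v1 v2, d v1 v2 = 0 → v1 = v2)
    (hd_symm : ∀ v1 v2, d v1 v2 = d v2 v1)
    (hd_tri : ∀ v1 v2 v3, d v1 v3 ≤ d v1 v2 + d v2 v3)
    (n : ℕ) (hn : 0 < n) (k : ℕ) (hk : 1 ≤ k) (ε : ℝ) (hε : 0 < ε)
    (D : V → V → ℝ)
    (hD_lb : ∀ v1 v2, (d v1 v2 : ℝ) ≤ D v1 v2)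
    (hD_ub : ∀ v1 v2, D v1 v2 ≤ (2 * (k : ℝ) - 1) * (d v1 v2 : ℝ))
    (τ : V → V → ℕ)
    (hτ_ge : ∀ v1 v2, d v1 v2 ≤ τ v1 v2)
    (hτ_eq : ∀ v1 v2, ε * (n : ℝ) / (2 * (k : ℝ) - 1) ≤ (d v1 v2 : ℝ) →
      τ v1 v2 = d v1 v2)
    (A : V → V → Option ℕ)
    (hA_some : ∀ v1 v2, ε * (n : ℝ) ≤ D v1 v2 → ε * (n : ℝ) ≤ (τ v1 v2 : ℝ) →
      A v1 v2 = some (τ v1 v2))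
    (hA_none : ∀ v1 v2, ¬(ε * (n : ℝ) ≤ D v1 v2 ∧ ε * (n : ℝ) ≤ (τ v1 v2 : ℝ)) →
      A v1 v2 = none) :
    ∀ v1 v2 : V,
      ((d v1 v2 : ℝ) < ε * (n : ℝ) → A v1 v2 = none) ∧
      (ε * (n : ℝ) ≤ (d v1 v2 : ℝ) → A v1 v2 = some (d v1 v2)) := by
  intro v1 v2
  have hk1 : (1:ℝ) ≤ 2 * (k:ℝ) - 1 := by
    have : (1:ℝ) ≤ (k:ℝ) := by exact_mod_cast hk
    linarith
  have hkpos : (0:ℝ) < 2 * (k:ℝ) - 1 := by linarith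
  constructor
  · intro hlt
    apply hA_none
    rintro ⟨hD, hτ⟩
    -- from hD and hD_ub: d ≥ εn/(2k-1), so τ = d < εn, contradiction with hτ
    have hdge : ε * (n : ℝ) / (2 * (k : ℝ) - 1) ≤ (d v1 v2 : ℝ) := by
      rw [div_le_iff₀ hkpos]
      calc ε * (n:ℝ) ≤ D v1 v2 := hD
        _ ≤ (2 * (k : ℝ) - 1) * (d v1 v2 : ℝ) := hD_ub v1 v2
        _ = (d v1 v2 : ℝ) * (2 * (k : ℝ) - 1) := mul_comm _ _
    have := hτ_eq v1 v2 hdge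
    rw [this] at hτ
    linarith
  · intro hge
    have hdge : ε * (n : ℝ) / (2 * (k : ℝ) - 1) ≤ (d v1 v2 : ℝ) := by
      calc ε * (n : ℝ) / (2 * (k : ℝ) - 1) ≤ ε * (n : ℝ) / 1 := by
            apply div_le_div_of_nonneg_left _ one_pos hk1
            positivity
        _ = ε * (n : ℝ) := by ring
        _ ≤ _ := hge
    have hτd := hτ_eq v1 v2 hdge
    rw [hA_some v1 v2 (le_trans hge (hD_lb v1 v2)) (by rw [hτd]; exact hge), hτd]
end

section
/- There is a universal constant C such that the following holds. Let V be a finite set with n ≥ 2 elements and a : V → ℝ≥0. Define d'(u, v) := a(u) + a(v) for u ≠ v and d'(v, v) := 0. Then there exist m ≤ C · log n and a map h : V → ℝ^m such that for all u, v ∈ V: d'(u, v) ≤ ‖h(u) − h(v)‖₁ ≤ C · d'(u, v). -/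
open Finset


private lemma ball_card_le (m d : ℕ) (x : Fin m → Bool) :
    (univ.filter fun y : Fin m → Bool =>
      (univ.filter fun i => y i ≠ x i).card < d).card ≤ ∑ i ∈ range d, m.choose i := by
  classical
  have : (univ.filter fun y : Fin m → Bool =>
      (univ.filter fun i => y i ≠ x i).card < d).card ≤
      ((range d).biUnion (fun k => Finset.powersetCard k (univ : Finset (Fin m)))).card := by
    apply Finset.card_le_card_of_injOn
      (fun y => univ.filter fun i => y i ≠ x i)
    · intro y hy
      simp only [mem_coe, mem_filter, mem_univ, true_and] at hy
      simp only [mem_coe, mem_biUnion, mem_range, Finset.mem_powersetCard]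
      exact ⟨_, hy, subset_univ _, rfl⟩
    · intro y1 h1 y2 h2 he
      simp only [] at he
      funext i
      have hiff : (y1 i ≠ x i) ↔ (y2 i ≠ x i) := by
        constructor <;> intro h
        · have : i ∈ univ.filter fun j => y2 j ≠ x j := by rw [← he]; simp [h]
          simpa using this
        · have : i ∈ univ.filter fun j => y1 j ≠ x j := by rw [he]; simp [h]
          simpa using this
      revert hiff; cases x i <;> cases y1 i <;> cases y2 i <;> simp
  refine this.trans ?_
  refine (Finset.card_biUnion_le).trans ?_
  apply Finset.sum_le_sum
  intro k _
  simp [Finset.card_powersetCard]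

/-- Greedy code construction -/
private lemma exists_code (m d N : ℕ) (hd : 0 < d)
    (hB : N * (∑ i ∈ range d, m.choose i) < 2 ^ m) :
    ∃ S : Finset (Fin m → Bool), S.card = N ∧
      ∀ x ∈ S, ∀ y ∈ S, x ≠ y → d ≤ (univ.filter fun i => x i ≠ y i).card := by
  classical
  induction N with
  | zero => exact ⟨∅, by simp⟩
  | succ k ih =>
    obtain ⟨S, hcard, hS⟩ := ih (lt_of_le_of_lt (by
      apply Nat.mul_le_mul_right; omega) hB)
    set bad : Finset (Fin m → Bool) :=
      S.biUnion (fun x => univ.filter fun y => (univ.filter fun i => y i ≠ x i).card < d) with hbad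
    have hbadcard : bad.card < 2 ^ m := by
      calc bad.card ≤ ∑ x ∈ S, (univ.filter fun y : Fin m → Bool =>
            (univ.filter fun i => y i ≠ x i).card < d).card := Finset.card_biUnion_le
        _ ≤ ∑ _x ∈ S, ∑ i ∈ range d, m.choose i :=
            Finset.sum_le_sum fun x _ => ball_card_le m d x
        _ = k * ∑ i ∈ range d, m.choose i := by rw [Finset.sum_const, hcard, smul_eq_mul]
        _ < 2 ^ m := lt_of_le_of_lt (by apply Nat.mul_le_mul_right; omega) hB
    have : ∃ y : Fin m → Bool, y ∉ bad := by
      by_contra hcon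
      push_neg at hcon
      have : (univ : Finset (Fin m → Bool)).card ≤ bad.card :=
        Finset.card_le_card fun y _ => hcon y
      rw [Finset.card_univ] at this
      simp only [Fintype.card_fun, Fintype.card_bool, Fintype.card_fin] at this
      omega
    obtain ⟨y, hy⟩ := this
    have hyS : y ∉ S := by
      intro hyS
      apply hy
      simp only [hbad, mem_biUnion]
      exact ⟨y, hyS, by simp [hd]⟩
    refine ⟨insert y S, by rw [Finset.card_insert_of_notMem hyS, hcard], ?_⟩
    have key : ∀ x ∈ S, d ≤ (univ.filter fun i => y i ≠ x i).card := by
      intro x hx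
      by_contra hcon
      push_neg at hcon
      exact hy (by simp only [hbad, mem_biUnion]; exact ⟨x, hx, by simp [hcon]⟩)
    have symm : ∀ x z : Fin m → Bool,
        (univ.filter fun i => x i ≠ z i).card = (univ.filter fun i => z i ≠ x i).card := by
      intro x z; congr 1; ext i; simp [ne_comm]
    intro x hx z hz hne
    rcases Finset.mem_insert.mp hx with hx1 | hx1
    · rcases Finset.mem_insert.mp hz with hz1 | hz1
      · exact absurd (hx1.trans hz1.symm) hne
      · subst hx1; exact key z hz1
    · rcases Finset.mem_insert.mp hz with hz1 | hz1
      · subst hz1; rw [symm]; exact key x hx1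
      · exact hS x hx1 z hz1 hne

/-- Binomial sum bound: ∑_{i ≤ d} C(m,i) ≤ 7^d (8/7)^m, for d ≤ m -/
private lemma binom_bound (m d : ℕ) (hdm : d ≤ m) :
    (∑ i ∈ range (d+1), (m.choose i : ℝ)) ≤ 7 ^ d * (8/7) ^ m := by
  have h1 : ∀ i ∈ range (d+1), (m.choose i : ℝ) ≤
      7 ^ d * ((m.choose i : ℝ) * (1/7) ^ i * 1 ^ (m - i)) := by
    intro i hi
    simp only [mem_range] at hi
    rw [one_pow, mul_one]
    have : (1/7 : ℝ) ^ d ≤ (1/7) ^ i := by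
      apply pow_le_pow_of_le_one (by norm_num) (by norm_num); omega
    calc (m.choose i : ℝ) = (7 ^ d * (1/7) ^ d) * m.choose i := by
          rw [← mul_pow]; norm_num
      _ ≤ (7 ^ d * (1/7) ^ i) * m.choose i := by
          apply mul_le_mul_of_nonneg_right _ (by positivity)
          apply mul_le_mul_of_nonneg_left this (by positivity)
      _ = 7 ^ d * ((m.choose i : ℝ) * (1/7) ^ i) := by ring
  calc (∑ i ∈ range (d+1), (m.choose i : ℝ))
      ≤ ∑ i ∈ range (d+1), 7 ^ d * ((m.choose i : ℝ) * (1/7) ^ i * 1 ^ (m - i)) :=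
        Finset.sum_le_sum h1
    _ ≤ ∑ i ∈ range (m+1), 7 ^ d * ((m.choose i : ℝ) * (1/7) ^ i * 1 ^ (m - i)) := by
        apply Finset.sum_le_sum_of_subset_of_nonneg
        · exact Finset.range_subset_range.mpr (by omega)
        · intro i _ _; positivity
    _ = 7 ^ d * ∑ i ∈ range (m+1), (1/7 : ℝ) ^ i * 1 ^ (m - i) * m.choose i := by
        rw [Finset.mul_sum]; congr 1; ext i; ring
    _ = 7 ^ d * (1/7 + 1) ^ m := by rw [← add_pow]
    _ ≤ 7 ^ d * (8/7) ^ m := by norm_num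

private lemma sign_abs_bound (x y : ℝ) (hx : 0 ≤ x) (hy : 0 ≤ y) (e1 e2 : ℝ)
    (h1 : e1 = 1 ∨ e1 = -1) (h2 : e2 = 1 ∨ e2 = -1) :
    |x * e1 - y * e2| ≤ x + y ∧ (e1 ≠ e2 → |x * e1 - y * e2| = x + y) := by
  rcases h1 with rfl | rfl <;> rcases h2 with rfl | rfl
  · refine ⟨by rw [mul_one, mul_one, abs_le]; constructor <;> linarith,
      fun h => absurd rfl h⟩
  · refine ⟨?_, fun _ => ?_⟩ <;>
      rw [show x * 1 - y * (-1) = x + y by ring, abs_of_nonneg (by linarith)]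
  · refine ⟨?_, fun _ => ?_⟩ <;>
      rw [show x * (-1) - y * 1 = -(x + y) by ring, abs_neg,
        abs_of_nonneg (by linarith)]
  · refine ⟨?_, fun h => absurd rfl h⟩
    rw [show x * (-1) - y * (-1) = -(x - y) by ring, abs_neg, abs_le]
    constructor <;> linarith


/-- There is a universal constant `C` such that the following holds. For every finite set `V`
with `n ≥ 2` elements and every nonnegative `a : V → ℝ`, the metric
`d'(u, v) := a u + a v` for `u ≠ v`, `d'(v, v) := 0`, embeds into `(ℝ^m, ℓ1)` with distortion
at most `C`, for some `m ≤ C · log n`. -/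
theorem star_metric_embeds_into_l1 :
    ∃ C : ℝ, 0 < C ∧
      ∀ (V : Type) [Fintype V] [DecidableEq V], 2 ≤ Fintype.card V →
        ∀ a : V → ℝ, (∀ v, 0 ≤ a v) →
          ∃ m : ℕ, (m : ℝ) ≤ C * Real.log (Fintype.card V) ∧
            ∃ h : V → (Fin m → ℝ),
              ∀ u v : V,
                (if u = v then (0 : ℝ) else a u + a v) ≤ ∑ i, |h u i - h v i| ∧
                ∑ i, |h u i - h v i| ≤ C * (if u = v then (0 : ℝ) else a u + a v) := by
  classical
  refine ⟨100, by norm_num, ?_⟩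
  intro V _ _ hn a ha
  set n := Fintype.card V with hn_def
  set s := Nat.clog 2 n with hs_def
  have hs1 : 1 ≤ s := Nat.clog_pos (by norm_num) (by omega)
  set m := 8 * s with hm_def
  have hsm : s ≤ m := by omega
  have hmpos : 0 < m := by omega
  -- numeric condition for the code
  have hnum : n * (∑ i ∈ range s, m.choose i) < 2 ^ m := by
    have hcast : ((n * ∑ i ∈ range s, m.choose i : ℕ) : ℝ) < ((2 ^ m : ℕ) : ℝ) := by
      push_cast
      have h1 : (∑ i ∈ range s, (m.choose i : ℝ)) ≤ ∑ i ∈ range (s+1), (m.choose i : ℝ) := by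
        apply Finset.sum_le_sum_of_subset_of_nonneg (Finset.range_subset_range.mpr (by omega))
        intro i _ _; positivity
      have h2 : (∑ i ∈ range (s+1), (m.choose i : ℝ)) ≤ 7 ^ s * (8/7) ^ m :=
        binom_bound m s hsm
      have h3 : (n : ℝ) ≤ 2 ^ s := by
        have := Nat.le_pow_clog (b := 2) (by norm_num) n
        exact_mod_cast this
      have h4 : (n : ℝ) * ∑ i ∈ range s, (m.choose i : ℝ) ≤ 2 ^ s * (7 ^ s * (8/7) ^ m) := by
        apply mul_le_mul h3 (h1.trans h2) (by positivity) (by positivity)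
      refine h4.trans_lt ?_
      have : (2:ℝ) ^ s * (7 ^ s * (8/7) ^ m) = (2 * 7 * (8/7)^8) ^ s := by
        rw [hm_def, pow_mul, ← mul_pow, ← mul_pow, mul_assoc]
      rw [this, show (2:ℝ)^m = (2^8:ℝ)^s by rw [hm_def, pow_mul]]
      apply pow_lt_pow_left₀ _ (by positivity) (by omega)
      norm_num
    have := hcast
    exact_mod_cast this
  obtain ⟨S, hScard, hSdist⟩ := exists_code m s n (by omega) hnum
  -- equivalence between V and the code
  have hcardeq : Fintype.card V = Fintype.card {x // x ∈ S} := by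
    rw [Fintype.card_coe, hScard]
  let e : V ≃ {x // x ∈ S} := Fintype.equivOfCardEq hcardeq
  let c : V → Fin m → Bool := fun v => (e v : Fin m → Bool)
  have hc_inj : Function.Injective c := by
    intro u v huv
    have : e u = e v := Subtype.ext huv
    exact e.injective this
  refine ⟨m, ?_, fun v i => (8 / (m:ℝ)) * (a v * (if c v i then 1 else -1)), ?_⟩
  · -- dimension bound
    have hlog2 : (0.6931471803 : ℝ) < Real.log 2 := Real.log_two_gt_d9
    have hlogn : Real.log 2 ≤ Real.log n := by
      apply Real.log_le_log (by norm_num)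
      exact_mod_cast hn
    have hpow : (2:ℝ) ^ (s - 1) ≤ (n : ℝ) := by
      have := Nat.pow_pred_clog_lt_self (b := 2) (by norm_num) (x := n) (by omega)
      have h2 : (2:ℕ) ^ (s - 1) ≤ n := this.le
      exact_mod_cast h2
    have hlogpow : ((s:ℝ) - 1) * Real.log 2 ≤ Real.log n := by
      have h1 : Real.log ((2:ℝ) ^ (s-1)) ≤ Real.log n :=
        Real.log_le_log (by positivity) hpow
      rw [Real.log_pow] at h1
      have : ((s - 1 : ℕ) : ℝ) = (s:ℝ) - 1 := by
        have : 1 ≤ s := hs1; push_cast [this]; ring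
      rwa [this] at h1
    have hslog : (s:ℝ) * Real.log 2 ≤ 2 * Real.log n := by nlinarith
    have hm8 : (m:ℝ) = 8 * s := by exact_mod_cast congrArg Nat.cast hm_def
    nlinarith [Real.log_nonneg (by exact_mod_cast hn.trans' (by norm_num) : (1:ℝ) ≤ n)]
  · -- distortion bounds
    intro u v
    by_cases huv : u = v
    · subst huv
      simp
    · rw [if_neg huv]
      have hcne : c u ≠ c v := fun h => huv (hc_inj h)
      set D := univ.filter (fun i => c u i ≠ c v i) with hD_def
      have hDs : s ≤ D.card := hSdist _ (e u).2 _ (e v).2 hcne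
      have hmR : (0:ℝ) < m := by exact_mod_cast hmpos
      have hterm : ∀ i : Fin m,
          |(8 / (m:ℝ)) * (a u * (if c u i then 1 else -1)) -
            (8 / (m:ℝ)) * (a v * (if c v i then 1 else -1))| ≤ (8 / (m:ℝ)) * (a u + a v) ∧
          (c u i ≠ c v i →
            |(8 / (m:ℝ)) * (a u * (if c u i then 1 else -1)) -
              (8 / (m:ℝ)) * (a v * (if c v i then 1 else -1))| = (8 / (m:ℝ)) * (a u + a v)) := by
        intro i
        have hsb := sign_abs_bound (a u) (a v) (ha u) (ha v)
          (if c u i then 1 else -1) (if c v i then 1 else -1)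
          (by by_cases h : c u i <;> simp [h]) (by by_cases h : c v i <;> simp [h])
        have hrw : (8 / (m:ℝ)) * (a u * (if c u i then 1 else -1)) -
            (8 / (m:ℝ)) * (a v * (if c v i then 1 else -1)) =
            (8 / (m:ℝ)) * (a u * (if c u i then 1 else -1) - a v * (if c v i then 1 else -1)) := by
          ring
        rw [hrw, abs_mul, abs_of_nonneg (by positivity : (0:ℝ) ≤ 8 / (m:ℝ))]
        constructor
        · exact mul_le_mul_of_nonneg_left hsb.1 (by positivity)
        · intro hne
          have hne' : (if c u i then (1:ℝ) else -1) ≠ (if c v i then (1:ℝ) else -1) := by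
            by_cases h1 : c u i <;> by_cases h2 : c v i
            · exact absurd (h1.trans h2.symm) hne
            · rw [if_pos h1, if_neg h2]; norm_num
            · rw [if_neg h1, if_pos h2]; norm_num
            · have e1 : c u i = false := by revert h1; cases c u i <;> simp
              have e2 : c v i = false := by revert h2; cases c v i <;> simp
              exact absurd (e1.trans e2.symm) hne
          rw [hsb.2 hne']
      constructor
      · -- lower bound
        calc a u + a v = (s:ℝ) * ((8 / (m:ℝ)) * (a u + a v)) := by
              rw [hm_def]; push_cast
              field_simp
          _ ≤ (D.card : ℝ) * ((8 / (m:ℝ)) * (a u + a v)) := by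
              apply mul_le_mul_of_nonneg_right (by exact_mod_cast hDs)
              have := ha u; have := ha v; positivity
          _ = ∑ i ∈ D, (8 / (m:ℝ)) * (a u + a v) := by rw [Finset.sum_const, nsmul_eq_mul]
          _ = ∑ i ∈ D, |(8 / (m:ℝ)) * (a u * (if c u i then 1 else -1)) -
                (8 / (m:ℝ)) * (a v * (if c v i then 1 else -1))| := by
              apply Finset.sum_congr rfl
              intro i hi
              rw [hD_def, mem_filter] at hi
              exact ((hterm i).2 hi.2).symm
          _ ≤ ∑ i, |(8 / (m:ℝ)) * (a u * (if c u i then 1 else -1)) -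
                (8 / (m:ℝ)) * (a v * (if c v i then 1 else -1))| := by
              apply Finset.sum_le_sum_of_subset_of_nonneg (Finset.subset_univ _)
              intro i _ _; exact abs_nonneg _
      · -- upper bound
        calc (∑ i, |(8 / (m:ℝ)) * (a u * (if c u i then 1 else -1)) -
              (8 / (m:ℝ)) * (a v * (if c v i then 1 else -1))|)
            ≤ ∑ _i : Fin m, (8 / (m:ℝ)) * (a u + a v) :=
              Finset.sum_le_sum fun i _ => (hterm i).1
          _ = (m:ℝ) * ((8 / (m:ℝ)) * (a u + a v)) := by
              rw [Finset.sum_const, Finset.card_univ, Fintype.card_fin, nsmul_eq_mul]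
          _ = 8 * (a u + a v) := by field_simp
          _ ≤ 100 * (a u + a v) := by
              have := ha u; have := ha v; nlinarith
end

section
/- There is a universal constant C such that the following holds. Let G = (V, E, w) be a finite weighted undirected graph with n vertices, d its shortest-path metric with respect to w, and d_unw its shortest-path metric with respect to unit weights. Then for every ε ∈ (0, 1/2) there exist m ∈ ℕ and a map f : V → ℝ^m with ε-distortion at most C · log(1/ε). -/
open Finset

/-- The weight of a walk: the sum of the weights of its edges. -/
def SimpleGraph.walkWeight {V : Type*} (G : SimpleGraph V) (w : Sym2 V → ℝ)
    {u v : V} (p : G.Walk u v) : ℝ :=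
  (p.edges.map w).sum

namespace LDE
open scoped Classical

lemma sum_toFinset_le_sum {α : Type*} [DecidableEq α] (f : α → ℝ) :
    ∀ (l : List α), (∀ e ∈ l, 0 ≤ f e) → ∑ x ∈ l.toFinset, f x ≤ (l.map f).sum := by
  intro l
  induction l with
  | nil => simp
  | cons a t ih =>
    intro h
    simp only [List.toFinset_cons, List.map_cons, List.sum_cons]
    by_cases ha : a ∈ t.toFinset
    · rw [Finset.insert_eq_self.2 ha]
      have := ih (fun e he => h e (List.mem_cons_of_mem a he))
      have h0 : 0 ≤ f a := h a List.mem_cons_self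
      linarith
    · rw [Finset.sum_insert ha]
      have := ih (fun e he => h e (List.mem_cons_of_mem a he))
      linarith

lemma list_sum_le {α : Type*} [DecidableEq α] (f : α → ℝ) (l1 l2 : List α)
    (h1 : l1.Nodup) (hsub : l1 ⊆ l2) (hnn : ∀ e ∈ l2, 0 ≤ f e) :
    (l1.map f).sum ≤ (l2.map f).sum := by
  rw [← List.sum_toFinset f h1]
  calc ∑ x ∈ l1.toFinset, f x ≤ ∑ x ∈ l2.toFinset, f x := by
        apply Finset.sum_le_sum_of_subset_of_nonneg
        · intro x hx
          simp only [List.mem_toFinset] at *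
          exact hsub hx
        · intro x hx _
          exact hnn x (by simpa using hx)
    _ ≤ (l2.map f).sum := sum_toFinset_le_sum f l2 hnn

section Graph

variable {V : Type} (G : SimpleGraph V) (w : Sym2 V → ℝ)

lemma ww_nonneg (hw : ∀ e ∈ G.edgeSet, 0 < w e) {u v : V} (p : G.Walk u v) :
    0 ≤ G.walkWeight w p := by
  apply List.sum_nonneg
  intro x hx
  simp only [List.mem_map] at hx
  obtain ⟨e, he, rfl⟩ := hx
  exact (hw e (p.edges_subset_edgeSet he)).le

lemma ww_append {u v x : V} (p : G.Walk u x) (q : G.Walk x v) :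
    G.walkWeight w (p.append q) = G.walkWeight w p + G.walkWeight w q := by
  simp [SimpleGraph.walkWeight, SimpleGraph.Walk.edges_append]

variable (d : V → V → ℝ)
variable (hw : ∀ e ∈ G.edgeSet, 0 < w e)
variable (hd : ∀ u v : V, IsLeast {x : ℝ | ∃ p : G.Walk u v, p.IsPath ∧ G.walkWeight w p = x} (d u v))

include hw hd

lemma d_nonneg (u v : V) : 0 ≤ d u v := by
  obtain ⟨p, _, hpw⟩ := (hd u v).1
  rw [← hpw]; exact ww_nonneg G w hw p

lemma d_self (u : V) : d u u = 0 := by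
  have h1 : d u u ≤ 0 := by
    have := (hd u u).2 ⟨SimpleGraph.Walk.nil' u, SimpleGraph.Walk.IsPath.nil, rfl⟩
    simpa [SimpleGraph.walkWeight] using this
  exact le_antisymm h1 (d_nonneg G w d hw hd u u)

lemma d_pos {u v : V} (huv : u ≠ v) : 0 < d u v := by
  obtain ⟨p, _, hpw⟩ := (hd u v).1
  rw [← hpw]
  cases p with
  | nil => exact absurd rfl huv
  | @cons _ b _ h q =>
    have h1 : 0 < w s(u, b) := hw _ h
    have h2 : 0 ≤ G.walkWeight w q := ww_nonneg G w hw q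
    simp only [SimpleGraph.walkWeight, SimpleGraph.Walk.edges_cons, List.map_cons, List.sum_cons]
    simp only [SimpleGraph.walkWeight] at h2
    linarith

lemma d_le_walk {u v : V} (p : G.Walk u v) : d u v ≤ G.walkWeight w p := by
  classical
  have h1 : d u v ≤ G.walkWeight w p.bypass :=
    (hd u v).2 ⟨p.bypass, p.bypass_isPath, rfl⟩
  refine h1.trans ?_
  apply list_sum_le w p.bypass.edges p.edges (p.bypass_isPath.isTrail.edges_nodup)
    (p.edges_bypass_subset)
  intro e he
  exact (hw e (p.edges_subset_edgeSet he)).le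

lemma d_triangle (u x v : V) : d u v ≤ d u x + d x v := by
  obtain ⟨p, _, hpw⟩ := (hd u x).1
  obtain ⟨q, _, hqw⟩ := (hd x v).1
  have := d_le_walk G w d hw hd (p.append q)
  rw [ww_append] at this
  rw [← hpw, ← hqw]
  linarith

lemma d_symm (u v : V) : d u v = d v u := by
  have key : ∀ a b : V, d a b ≤ d b a := by
    intro a b
    obtain ⟨p, _, hpw⟩ := (hd b a).1
    have := d_le_walk G w d hw hd p.reverse
    rw [← hpw]
    refine this.trans ?_
    simp [SimpleGraph.walkWeight, SimpleGraph.Walk.edges_reverse,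
      List.map_reverse, List.sum_reverse, le_refl]
  exact le_antisymm (key u v) (key v u)

lemma d_support_le [DecidableEq V] {a b : V} {p : G.Walk a b} (hp : p.IsPath)
    (hpw : G.walkWeight w p = d a b) {x : V} (hx : x ∈ p.support) : d a x ≤ d a b := by
  have h1 : d a x ≤ G.walkWeight w (p.takeUntil x hx) :=
    d_le_walk G w d hw hd _
  have h2 : G.walkWeight w (p.takeUntil x hx) + G.walkWeight w (p.dropUntil x hx)
      = G.walkWeight w p := by
    rw [← ww_append]
    congr 1
    exact (p.take_spec hx)
  have h3 : 0 ≤ G.walkWeight w (p.dropUntil x hx) := ww_nonneg G w hw _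
  rw [← hpw]
  linarith

/-- the ball around an endpoint of a far pair is large -/
lemma far_ball_card [Fintype V] [DecidableEq V] {a b : V} {ε : ℝ}
    (hfar : ε * (Fintype.card V : ℝ) ≤ (G.dist a b : ℝ)) :
    ε * (Fintype.card V : ℝ) ≤ ((Finset.univ.filter (fun x => d a x ≤ d a b)).card : ℝ) := by
  obtain ⟨p, hp, hpw⟩ := (hd a b).1
  have hsub : p.support.toFinset ⊆ Finset.univ.filter (fun x => d a x ≤ d a b) := by
    intro x hx
    simp only [List.mem_toFinset] at hx
    simp only [Finset.mem_filter, Finset.mem_univ, true_and]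
    exact d_support_le G w d hw hd hp hpw hx
  have hcard : p.support.toFinset.card = p.length + 1 := by
    rw [List.toFinset_card_of_nodup hp.support_nodup, SimpleGraph.Walk.length_support]
  have hdist : G.dist a b ≤ p.length := SimpleGraph.dist_le p
  have h2 : (G.dist a b : ℝ) ≤ (p.support.toFinset.card : ℝ) := by
    rw [hcard]; exact_mod_cast hdist.trans (Nat.le_succ _)
  refine hfar.trans (h2.trans ?_)
  exact_mod_cast Finset.card_le_card hsub

end Graph


section Prob
variable {V : Type}

variable {V : Type}

lemma miss_sum (p q : ℝ) (U : Finset V) : ∀ C ⊆ U,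
    ∑ S ∈ U.powerset, (p ^ S.card * q ^ (U.card - S.card)) * (if S ∩ C = ∅ then 1 else 0)
      = q ^ C.card * (p + q) ^ (U.card - C.card) := by
  induction U using Finset.induction_on with
  | empty =>
    intro C hC
    rw [Finset.subset_empty] at hC; subst hC
    simp
  | @insert a U ha ih =>
    intro C hC
    have hcard : (insert a U).card = U.card + 1 := Finset.card_insert_of_notMem ha
    rw [Finset.sum_powerset_insert ha]
    by_cases haC : a ∈ C
    · -- second sum vanishes
      have h2 : ∑ S ∈ U.powerset,
          (p ^ (insert a S).card * q ^ ((insert a U).card - (insert a S).card)) *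
            (if (insert a S) ∩ C = ∅ then 1 else 0) = 0 := by
        apply Finset.sum_eq_zero
        intro S hS
        have : a ∈ (insert a S) ∩ C := Finset.mem_inter.2 ⟨Finset.mem_insert_self _ _, haC⟩
        have hne : (insert a S) ∩ C ≠ ∅ := Finset.ne_empty_of_mem this
        simp [hne]
      rw [h2, add_zero]
      set C' := C.erase a with hC'
      have hC'U : C' ⊆ U := by
        intro z hz
        have hz1 := Finset.mem_of_mem_erase hz
        have hz2 := Finset.ne_of_mem_erase hz
        rcases Finset.mem_insert.1 (hC hz1) with h | h
        · exact absurd h hz2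
        · exact h
      have h1 : ∑ S ∈ U.powerset,
          (p ^ S.card * q ^ ((insert a U).card - S.card)) * (if S ∩ C = ∅ then 1 else 0)
          = q * (q ^ C'.card * (p + q) ^ (U.card - C'.card)) := by
        rw [← ih C' hC'U, Finset.mul_sum]
        apply Finset.sum_congr rfl
        intro S hS
        have hSU : S ⊆ U := Finset.mem_powerset.1 hS
        have haS : a ∉ S := fun h => ha (hSU h)
        have hind : (S ∩ C = ∅) ↔ (S ∩ C' = ∅) := by
          constructor
          · intro h
            apply Finset.eq_empty_of_forall_notMem
            intro z hz
            have := Finset.mem_inter.1 hz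
            have : z ∈ S ∩ C := Finset.mem_inter.2 ⟨this.1, Finset.mem_of_mem_erase this.2⟩
            simp [h] at this
          · intro h
            apply Finset.eq_empty_of_forall_notMem
            intro z hz
            obtain ⟨hzS, hzC⟩ := Finset.mem_inter.1 hz
            have hza : z ≠ a := fun he => haS (he ▸ hzS)
            have : z ∈ S ∩ C' := Finset.mem_inter.2 ⟨hzS, Finset.mem_erase.2 ⟨hza, hzC⟩⟩
            simp [h] at this
        have hle := Finset.card_le_card hSU
        have hexp : (insert a U).card - S.card = (U.card - S.card) + 1 := by
          rw [hcard]; omega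
        rw [hexp]
        simp only [hind]
        rw [pow_succ]
        ring
      rw [h1]
      have hCcard : C.card = C'.card + 1 := by
        rw [hC']
        rw [Finset.card_erase_of_mem haC]
        have : 1 ≤ C.card := Finset.card_pos.2 ⟨a, haC⟩
        omega
      have hC'le : C'.card ≤ U.card := Finset.card_le_card hC'U
      rw [hCcard, hcard]
      have h4 : U.card + 1 - (C'.card + 1) = U.card - C'.card := by omega
      rw [h4, pow_succ]
      ring
    · -- a ∉ C
      have hCU : C ⊆ U := by
        intro z hz
        rcases Finset.mem_insert.1 (hC hz) with h | h
        · exact absurd (h ▸ hz) haC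
        · exact h
      have hCle : C.card ≤ U.card := Finset.card_le_card hCU
      have h1 : ∑ S ∈ U.powerset,
          (p ^ S.card * q ^ ((insert a U).card - S.card)) * (if S ∩ C = ∅ then 1 else 0)
          = q * (q ^ C.card * (p + q) ^ (U.card - C.card)) := by
        rw [← ih C hCU, Finset.mul_sum]
        apply Finset.sum_congr rfl
        intro S hS
        have hSU : S ⊆ U := Finset.mem_powerset.1 hS
        have hle := Finset.card_le_card hSU
        have hexp : (insert a U).card - S.card = (U.card - S.card) + 1 := by
          rw [hcard]; omega
        rw [hexp, pow_succ]
        ring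
      have h2 : ∑ S ∈ U.powerset,
          (p ^ (insert a S).card * q ^ ((insert a U).card - (insert a S).card)) *
            (if (insert a S) ∩ C = ∅ then 1 else 0)
          = p * (q ^ C.card * (p + q) ^ (U.card - C.card)) := by
        rw [← ih C hCU, Finset.mul_sum]
        apply Finset.sum_congr rfl
        intro S hS
        have hSU : S ⊆ U := Finset.mem_powerset.1 hS
        have haS : a ∉ S := fun h => ha (hSU h)
        have hins : (insert a S).card = S.card + 1 := Finset.card_insert_of_notMem haS
        have hexp : (insert a U).card - (insert a S).card = U.card - S.card := by
          have := Finset.card_le_card hSU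
          omega
        have hind : ((insert a S) ∩ C = ∅) ↔ (S ∩ C = ∅) := by
          rw [Finset.insert_inter_of_notMem haC]
        rw [hexp, hins]
        simp only [hind]
        ring
      rw [h1, h2]
      have hexp2 : (insert a U).card - C.card = (U.card - C.card) + 1 := by
        rw [hcard]; omega
      rw [hexp2, pow_succ]
      ring

def mu (N : Finset V) (p : ℝ) (S : Finset V) : ℝ := p ^ S.card * (1 - p) ^ (N.card - S.card)

lemma mu_nonneg (N : Finset V) {p : ℝ} (h0 : 0 ≤ p) (h1 : p ≤ 1) (S : Finset V) :
    0 ≤ mu N p S := by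
  apply mul_nonneg (pow_nonneg h0 _) (pow_nonneg (by linarith) _)

lemma sum_mu (N : Finset V) (p : ℝ) : ∑ S ∈ N.powerset, mu N p S = 1 := by
  have := miss_sum p (1 - p) N ∅ (Finset.empty_subset N)
  simpa [mu] using this

lemma miss_mu (N : Finset V) (p : ℝ) (B : Finset V) (hB : B ⊆ N) :
    ∑ S ∈ N.powerset, mu N p S * (if S ∩ B = ∅ then 1 else 0) = (1 - p) ^ B.card := by
  have := miss_sum p (1 - p) N B hB
  simpa [mu] using this

lemma hitmiss (N : Finset V) (p : ℝ) (A B : Finset V) (hA : A ⊆ N) (hB : B ⊆ N)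
    (hAB : Disjoint A B) :
    ∑ S ∈ N.powerset, mu N p S * (if (S ∩ A).Nonempty ∧ S ∩ B = ∅ then 1 else 0)
      = (1 - (1 - p) ^ A.card) * (1 - p) ^ B.card := by
  have key : ∀ S : Finset V,
      (if (S ∩ A).Nonempty ∧ S ∩ B = ∅ then (1:ℝ) else 0)
        = (if S ∩ B = ∅ then 1 else 0) - (if S ∩ (A ∪ B) = ∅ then 1 else 0) := by
    intro S
    have hdist : S ∩ (A ∪ B) = (S ∩ A) ∪ (S ∩ B) := Finset.inter_union_distrib_left S A B
    by_cases hb : S ∩ B = ∅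
    · by_cases hA' : S ∩ A = ∅
      · have : S ∩ (A ∪ B) = ∅ := by rw [hdist, hA', hb]; simp
        simp [hb, hA', this, Finset.not_nonempty_iff_eq_empty]
      · have h1 : (S ∩ A).Nonempty := Finset.nonempty_iff_ne_empty.2 hA'
        have : S ∩ (A ∪ B) ≠ ∅ := by
          rw [hdist, hb]
          simpa [Finset.union_empty] using hA'
        simp [hb, h1, this]
    · have : S ∩ (A ∪ B) ≠ ∅ := by
        rw [hdist]
        intro h
        have := Finset.union_eq_empty.1 h
        exact hb this.2
      simp [hb, this]
  calc ∑ S ∈ N.powerset, mu N p S * (if (S ∩ A).Nonempty ∧ S ∩ B = ∅ then 1 else 0)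
      = ∑ S ∈ N.powerset, (mu N p S * (if S ∩ B = ∅ then 1 else 0)
          - mu N p S * (if S ∩ (A ∪ B) = ∅ then 1 else 0)) := by
        apply Finset.sum_congr rfl
        intro S _
        rw [key S]
        ring
    _ = (1 - p) ^ B.card - (1 - p) ^ (A ∪ B).card := by
        rw [Finset.sum_sub_distrib, miss_mu N p B hB,
          miss_mu N p (A ∪ B) (Finset.union_subset hA hB)]
    _ = (1 - (1 - p) ^ A.card) * (1 - p) ^ B.card := by
        rw [Finset.card_union_of_disjoint hAB]
        ring

lemma bernoulli_hit {m : ℕ} {p : ℝ} (h0 : 0 ≤ p) (h1 : p ≤ 1) (hmp : 1/2 ≤ (m:ℝ) * p) :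
    (1 - p) ^ m ≤ 2/3 := by
  have hber : 1 + (m:ℝ) * p ≤ (1 + p) ^ m := one_add_mul_le_pow (by linarith) m
  have hnn : (0:ℝ) ≤ (1 - p) ^ m := pow_nonneg (by linarith) m
  have hprod : (1 + (m:ℝ) * p) * (1 - p) ^ m ≤ ((1+p) * (1-p)) ^ m := by
    rw [mul_pow]
    exact mul_le_mul_of_nonneg_right hber hnn
  have h2 : ((1+p) * (1-p)) ^ m ≤ 1 := by
    apply pow_le_one₀ (by nlinarith) (by nlinarith)
  have h3 : (1 + (m:ℝ) * p) * (1 - p) ^ m ≤ 1 := hprod.trans h2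
  nlinarith

lemma quarter_le (t : ℕ) : (1/4 : ℝ) ≤ (1 - (2⁻¹)^(t+1)) ^ (2^(t+1)) := by
  induction t with
  | zero => norm_num
  | succ t ih =>
    have hx : (0:ℝ) ≤ (2⁻¹ : ℝ)^(t+2) := by positivity
    have hx2 : ((2⁻¹ : ℝ))^(t+2) ≤ 1/4 := by
      calc ((2⁻¹ : ℝ))^(t+2) ≤ (2⁻¹)^2 := by
            apply pow_le_pow_of_le_one (by norm_num) (by norm_num) (by omega)
        _ = 1/4 := by norm_num
    have hsq : (1 - (2⁻¹:ℝ)^(t+1)) ≤ (1 - (2⁻¹)^(t+2))^2 := by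
      have : ((2⁻¹:ℝ))^(t+1) = 2 * (2⁻¹)^(t+2) := by
        rw [pow_succ]
        ring
      nlinarith [hx]
    have hpow : (2:ℕ)^(t+2) = 2^(t+1) * 2 := by ring
    have hb : (0:ℝ) ≤ 1 - (2⁻¹)^(t+1) := by
      have : ((2⁻¹:ℝ))^(t+1) ≤ 1 := pow_le_one₀ (by norm_num) (by norm_num)
      linarith
    calc (1/4 : ℝ) ≤ (1 - (2⁻¹)^(t+1)) ^ (2^(t+1)) := ih
      _ ≤ ((1 - (2⁻¹)^(t+2))^2) ^ (2^(t+1)) := pow_le_pow_left₀ hb hsq _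
      _ = (1 - (2⁻¹)^(t+2)) ^ (2 * 2^(t+1)) := (pow_mul _ 2 _).symm
      _ = (1 - (2⁻¹)^(t+2)) ^ (2^(t+2)) := by congr 1; ring









noncomputable def dS (δ : V → V → ℝ) (x : V) (S : Finset V) : ℝ :=
  if h : S.Nonempty then (S.image (δ x)).min' (h.image _) else 0

lemma dS_le (δ : V → V → ℝ) (x z : V) (S : Finset V) (hz : z ∈ S) : dS δ x S ≤ δ x z := by
  rw [dS, dif_pos ⟨z, hz⟩]
  exact Finset.min'_le _ _ (Finset.mem_image_of_mem _ hz)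

lemma dS_attained (δ : V → V → ℝ) (x : V) (S : Finset V) (h : S.Nonempty) :
    ∃ z ∈ S, dS δ x S = δ x z := by
  rw [dS, dif_pos h]
  have hm := Finset.min'_mem (S.image (δ x)) (h.image _)
  obtain ⟨z, hz, hze⟩ := Finset.mem_image.1 hm
  exact ⟨z, hz, hze.symm⟩

lemma le_dS (δ : V → V → ℝ) (x : V) (S : Finset V) (h : S.Nonempty) {c : ℝ}
    (hc : ∀ z ∈ S, c ≤ δ x z) : c ≤ dS δ x S := by
  rw [dS, dif_pos h]
  apply Finset.le_min'
  intro ρ hρ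
  obtain ⟨z, hz, rfl⟩ := Finset.mem_image.1 hρ
  exact hc z hz

lemma bourgain_net (N : Finset V) (δ : V → V → ℝ)
    (hsymm : ∀ x ∈ N, ∀ y ∈ N, δ x y = δ y x)
    (htri : ∀ x ∈ N, ∀ y ∈ N, ∀ z ∈ N, δ x z ≤ δ x y + δ y z)
    (hnn : ∀ x ∈ N, ∀ y ∈ N, 0 ≤ δ x y)
    (hself : ∀ x ∈ N, δ x x = 0)
    (hpos : ∀ x ∈ N, ∀ y ∈ N, x ≠ y → 0 < δ x y) :
    ∃ (g : V → (Fin (Nat.log 2 N.card + 1) × {S : Finset V // S ∈ N.powerset}) → ℝ),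
      (∀ x ∈ N, ∀ y ∈ N, δ x y ≤ ∑ i, |g x i - g y i|) ∧
      (∀ x ∈ N, ∀ y ∈ N, ∑ i, |g x i - g y i|
          ≤ 48 * ((Nat.log 2 N.card : ℝ) + 1) * δ x y) := by
  classical
  set T : ℕ := Nat.log 2 N.card + 1 with hT
  set pr : ℕ → ℝ := fun t => (2⁻¹ : ℝ)^(t+1) with hpr
  have hpr0 : ∀ t : ℕ, 0 < pr t := fun t => by positivity
  have hpr1 : ∀ t : ℕ, pr t ≤ 2⁻¹ := by
    intro t
    calc pr t = (2⁻¹:ℝ)^(t+1) := rfl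
      _ ≤ (2⁻¹:ℝ)^1 := pow_le_pow_of_le_one (by norm_num) (by norm_num) (by omega)
      _ = 2⁻¹ := pow_one _
  have hprle1 : ∀ t : ℕ, pr t ≤ 1 := fun t => le_trans (hpr1 t) (by norm_num)
  have hq0 : ∀ t : ℕ, (0:ℝ) ≤ 1 - pr t := fun t => by
    have := hpr1 t; norm_num at this ⊢; linarith
  have hq1 : ∀ t : ℕ, (1:ℝ) - pr t ≤ 1 := fun t => by have := hpr0 t; linarith
  have hμnn : ∀ (t : ℕ) (S : Finset V), 0 ≤ mu N (pr t) S :=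
    fun t S => mu_nonneg N (hpr0 t).le (hprle1 t) S
  refine ⟨fun v i => 48 * mu N (pr i.1.1) i.2.1 * dS δ v i.2.1, ?_, ?_⟩
  all_goals
    have sumId : ∀ v1 v2 : V, (∑ i : Fin T × {S : Finset V // S ∈ N.powerset},
          |48 * mu N (pr i.1.1) i.2.1 * dS δ v1 i.2.1
            - 48 * mu N (pr i.1.1) i.2.1 * dS δ v2 i.2.1|)
        = ∑ t ∈ Finset.range T, ∑ S ∈ N.powerset,
            48 * (mu N (pr t) S * |dS δ v1 S - dS δ v2 S|) := by
      intro v1 v2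
      rw [Fintype.sum_prod_type]
      rw [← Fin.sum_univ_eq_sum_range (fun t => ∑ S ∈ N.powerset,
        48 * (mu N (pr t) S * |dS δ v1 S - dS δ v2 S|)) T]
      apply Finset.sum_congr rfl
      intro t _
      rw [← Finset.sum_coe_sort N.powerset
        (fun S => 48 * (mu N (pr t.1) S * |dS δ v1 S - dS δ v2 S|))]
      apply Finset.sum_congr rfl
      intro S _
      rw [← mul_sub, abs_mul]
      rw [abs_of_nonneg (mul_nonneg (by norm_num : (0:ℝ) ≤ 48) (hμnn t.1 S.1))]
      ring
  · -- lower bound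
    intro x hx y hy
    beta_reduce
    rw [sumId x y]
    by_cases hxy : x = y
    · subst hxy
      rw [hself x hx]
      apply Finset.sum_nonneg
      intro t _
      apply Finset.sum_nonneg
      intro S _
      have := hμnn t S
      positivity
    have hδ0 : 0 < δ x y := hpos x hx y hy hxy
    set Dc : Finset ℝ := insert 0 ((N.image (δ x)) ∪ (N.image (δ y))) with hDcdef
    have hDnn : ∀ ρ ∈ Dc, 0 ≤ ρ := by
      intro ρ hρ
      rcases Finset.mem_insert.1 hρ with h | h
      · rw [h]
      rcases Finset.mem_union.1 h with h' | h'
      · obtain ⟨z, hz, rfl⟩ := Finset.mem_image.1 h'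
        exact hnn x hx z hz
      · obtain ⟨z, hz, rfl⟩ := Finset.mem_image.1 h'
        exact hnn y hy z hz
    set Cond : ℕ → ℝ → Prop := fun t ρ =>
      2^t ≤ (N.filter (fun z => δ x z ≤ ρ)).card ∧ 2^t ≤ (N.filter (fun z => δ y z ≤ ρ)).card
      with hCond
    set R : ℕ → ℝ := fun t =>
      if h : (Dc.filter (Cond t)).Nonempty then min (δ x y / 4) ((Dc.filter (Cond t)).min' h)
      else δ x y / 4 with hRdef
    have hR14 : ∀ t, R t ≤ δ x y / 4 := by
      intro t
      simp only [hRdef]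
      by_cases h : (Dc.filter (Cond t)).Nonempty
      · rw [dif_pos h]; exact min_le_left _ _
      · rw [dif_neg h]
    have hRnn : ∀ t, 0 ≤ R t := by
      intro t
      simp only [hRdef]
      by_cases h : (Dc.filter (Cond t)).Nonempty
      · rw [dif_pos h]
        apply le_min (by linarith)
        apply Finset.le_min'
        intro ρ hρ
        exact hDnn ρ (Finset.mem_of_mem_filter ρ hρ)
      · rw [dif_neg h]; linarith
    have hR0 : R 0 = 0 := by
      have hcond0 : Cond 0 (0:ℝ) := by
        constructor
        · have : x ∈ N.filter (fun z => δ x z ≤ (0:ℝ)) :=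
            Finset.mem_filter.2 ⟨hx, by rw [hself x hx]⟩
          simpa using Finset.card_pos.2 ⟨x, this⟩
        · have : y ∈ N.filter (fun z => δ y z ≤ (0:ℝ)) :=
            Finset.mem_filter.2 ⟨hy, by rw [hself y hy]⟩
          simpa using Finset.card_pos.2 ⟨y, this⟩
      have hmem : (0:ℝ) ∈ Dc.filter (Cond 0) :=
        Finset.mem_filter.2 ⟨Finset.mem_insert_self _ _, hcond0⟩
      have hne : (Dc.filter (Cond 0)).Nonempty := ⟨0, hmem⟩
      have hmin : (Dc.filter (Cond 0)).min' hne = 0 := by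
        apply le_antisymm (Finset.min'_le _ _ hmem)
        apply Finset.le_min'
        intro ρ hρ
        exact hDnn ρ (Finset.mem_of_mem_filter ρ hρ)
      simp only [hRdef]
      rw [dif_pos hne, hmin]
      exact min_eq_right (by linarith)
    have hRmono : ∀ t, R t ≤ R (t+1) := by
      intro t
      by_cases h : (Dc.filter (Cond (t+1))).Nonempty
      · have hsub : Dc.filter (Cond (t+1)) ⊆ Dc.filter (Cond t) := by
          intro ρ hρ
          obtain ⟨hρ1, hρ2⟩ := Finset.mem_filter.1 hρ
          exact Finset.mem_filter.2 ⟨hρ1,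
            le_trans (Nat.pow_le_pow_right (by norm_num) (Nat.le_succ t)) hρ2.1,
            le_trans (Nat.pow_le_pow_right (by norm_num) (Nat.le_succ t)) hρ2.2⟩
        have hne : (Dc.filter (Cond t)).Nonempty := h.mono hsub
        simp only [hRdef]
        rw [dif_pos h, dif_pos hne]
        exact min_le_min (le_refl _) (Finset.min'_subset h hsub)
      · have h14 := hR14 t
        have : R (t+1) = δ x y / 4 := by
          simp only [hRdef]
          rw [dif_neg h]
        rw [this]
        exact h14
    have hRT : R T = δ x y / 4 := by
      have hempty : ¬ (Dc.filter (Cond T)).Nonempty := by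
        rintro ⟨ρ, hρ⟩
        have hc := (Finset.mem_filter.1 hρ).2
        have h1 : (N.filter (fun z => δ x z ≤ ρ)).card ≤ N.card :=
          Finset.card_le_card (Finset.filter_subset _ _)
        have h2 : N.card < 2^T := by
          rw [hT]
          exact Nat.lt_pow_succ_log_self (by norm_num) N.card
        have h3 : (2:ℕ)^T < 2^T := lt_of_le_of_lt (le_trans hc.1 h1) h2
        exact absurd h3 (lt_irrefl _)
      simp only [hRdef]
      rw [dif_neg hempty]
    have hRCond : ∀ t, R t < δ x y / 4 → Cond t (R t) := by
      intro t hlt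
      by_cases h : (Dc.filter (Cond t)).Nonempty
      · have hReq : R t = min (δ x y / 4) ((Dc.filter (Cond t)).min' h) := by
          simp only [hRdef]
          rw [dif_pos h]
        rcases le_total (δ x y / 4) ((Dc.filter (Cond t)).min' h) with hc | hc
        · rw [hReq, min_eq_left hc] at hlt
          exact absurd hlt (lt_irrefl _)
        · rw [hReq, min_eq_right hc]
          exact (Finset.mem_filter.1 (Finset.min'_mem _ h)).2
      · have hReq : R t = δ x y / 4 := by
          simp only [hRdef]
          rw [dif_neg h]
        rw [hReq] at hlt
        exact absurd hlt (lt_irrefl _)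
    -- per-scale bound
    have key : ∀ t : ℕ, (R (t+1) - R t)/12
        ≤ ∑ S ∈ N.powerset, mu N (pr t) S * |dS δ x S - dS δ y S| := by
      intro t
      rcases le_or_gt (R (t+1)) (R t) with hle | hlt
      · have h0 : (R (t+1) - R t)/12 ≤ 0 := by linarith
        refine h0.trans (Finset.sum_nonneg ?_)
        intro S _
        exact mul_nonneg (hμnn t S) (abs_nonneg _)
      · have hRt4 : R t < δ x y / 4 := lt_of_lt_of_le hlt (hR14 (t+1))
        have hcond := hRCond t hRt4
        have hsmall : (N.filter (fun z => δ x z < R (t+1))).card < 2^(t+1)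
            ∨ (N.filter (fun z => δ y z < R (t+1))).card < 2^(t+1) := by
          by_contra hcon
          push_neg at hcon
          obtain ⟨h1, h2⟩ := hcon
          have hOxne : (N.filter (fun z => δ x z < R (t+1))).Nonempty := by
            rw [← Finset.card_pos]
            calc 0 < 2^(t+1) := Nat.pow_pos (by norm_num)
              _ ≤ _ := h1
          have hOyne : (N.filter (fun z => δ y z < R (t+1))).Nonempty := by
            rw [← Finset.card_pos]
            calc 0 < 2^(t+1) := Nat.pow_pos (by norm_num)
              _ ≤ _ := h2
          set sx := ((N.filter (fun z => δ x z < R (t+1))).image (δ x)).max' (hOxne.image _)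
            with hsx
          set sy := ((N.filter (fun z => δ y z < R (t+1))).image (δ y)).max' (hOyne.image _)
            with hsy
          have hsxlt : sx < R (t+1) := by
            rw [hsx]
            apply (Finset.max'_lt_iff _ _).2
            intro ρ hρ
            obtain ⟨z, hz, rfl⟩ := Finset.mem_image.1 hρ
            exact (Finset.mem_filter.1 hz).2
          have hsylt : sy < R (t+1) := by
            rw [hsy]
            apply (Finset.max'_lt_iff _ _).2
            intro ρ hρ
            obtain ⟨z, hz, rfl⟩ := Finset.mem_image.1 hρ
            exact (Finset.mem_filter.1 hz).2
          have hsxDc : sx ∈ Dc := by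
            have := Finset.max'_mem _ (hOxne.image (δ x))
            obtain ⟨z, hz, hze⟩ := Finset.mem_image.1 this
            rw [hsx, ← hze]
            exact Finset.mem_insert_of_mem (Finset.mem_union_left _
              (Finset.mem_image_of_mem _ (Finset.mem_of_mem_filter z hz)))
          have hsyDc : sy ∈ Dc := by
            have := Finset.max'_mem _ (hOyne.image (δ y))
            obtain ⟨z, hz, hze⟩ := Finset.mem_image.1 this
            rw [hsy, ← hze]
            exact Finset.mem_insert_of_mem (Finset.mem_union_right _
              (Finset.mem_image_of_mem _ (Finset.mem_of_mem_filter z hz)))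
          have hs0Dc : max sx sy ∈ Dc := by
            rcases max_choice sx sy with h | h <;> rw [h] <;> assumption
          have hconds0 : Cond (t+1) (max sx sy) := by
            constructor
            · refine le_trans h1 (Finset.card_le_card ?_)
              intro z hz
              obtain ⟨hzN, hzlt⟩ := Finset.mem_filter.1 hz
              refine Finset.mem_filter.2 ⟨hzN, ?_⟩
              have : δ x z ≤ sx := Finset.le_max' _ _
                (Finset.mem_image_of_mem _ (Finset.mem_filter.2 ⟨hzN, hzlt⟩))
              exact this.trans (le_max_left _ _)
            · refine le_trans h2 (Finset.card_le_card ?_)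
              intro z hz
              obtain ⟨hzN, hzlt⟩ := Finset.mem_filter.1 hz
              refine Finset.mem_filter.2 ⟨hzN, ?_⟩
              have : δ y z ≤ sy := Finset.le_max' _ _
                (Finset.mem_image_of_mem _ (Finset.mem_filter.2 ⟨hzN, hzlt⟩))
              exact this.trans (le_max_right _ _)
          have hmem : max sx sy ∈ Dc.filter (Cond (t+1)) :=
            Finset.mem_filter.2 ⟨hs0Dc, hconds0⟩
          have hne : (Dc.filter (Cond (t+1))).Nonempty := ⟨_, hmem⟩
          have hcontra : R (t+1) ≤ max sx sy := by
            simp only [hRdef]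
            rw [dif_pos hne]
            exact le_trans (min_le_right _ _) (Finset.min'_le _ _ hmem)
          have : max sx sy < R (t+1) := max_lt hsxlt hsylt
          linarith
        have core : ∀ cx cy : V, cx ∈ N → cy ∈ N → δ cx cy = δ x y →
            2^t ≤ (N.filter (fun z => δ cx z ≤ R t)).card →
            (N.filter (fun z => δ cy z < R (t+1))).card < 2^(t+1) →
            (R (t+1) - R t)/12
              ≤ ∑ S ∈ N.powerset, mu N (pr t) S * |dS δ cx S - dS δ cy S| := by
          intro cx cy hcx hcy hdeq hA hB
          set A := N.filter (fun z => δ cx z ≤ R t) with hAdef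
          set B := N.filter (fun z => δ cy z < R (t+1)) with hBdef
          have hdisj : Disjoint A B := by
            rw [Finset.disjoint_left]
            intro z hzA hzB
            obtain ⟨hzN, hz1⟩ := Finset.mem_filter.1 hzA
            obtain ⟨_, hz2⟩ := Finset.mem_filter.1 hzB
            have htr : δ cx cy ≤ δ cx z + δ z cy := htri cx hcx z hzN cy hcy
            have hsz : δ z cy = δ cy z := hsymm z hzN cy hcy
            have hR2 : R (t+1) ≤ δ x y / 4 := hR14 (t+1)
            have hR1 : R t ≤ δ x y / 4 := hR14 t
            rw [hdeq, hsz] at htr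
            linarith
          have hevent := hitmiss N (pr t) A B (Finset.filter_subset _ _)
            (Finset.filter_subset _ _) hdisj
          have hprob : (1:ℝ)/12 ≤ (1 - (1 - pr t) ^ A.card) * (1 - pr t) ^ B.card := by
            have e1 : (1 - pr t) ^ A.card ≤ (1 - pr t)^(2^t) :=
              pow_le_pow_of_le_one (hq0 t) (hq1 t) hA
            have e2 : (1 - pr t)^(2^t) ≤ 2/3 := by
              apply bernoulli_hit (hpr0 t).le (hprle1 t)
              show (1:ℝ)/2 ≤ ((2^t : ℕ):ℝ) * pr t
              have hval : ((2^t : ℕ):ℝ) * pr t = 1/2 := by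
                show ((2^t : ℕ):ℝ) * (2⁻¹:ℝ)^(t+1) = 1/2
                push_cast
                rw [pow_succ, ← mul_assoc, ← mul_pow]
                norm_num
              rw [hval]
            have e4 : (1 - pr t) ^ B.card ≥ (1 - pr t) ^ (2^(t+1)) :=
              pow_le_pow_of_le_one (hq0 t) (hq1 t) (le_of_lt hB)
            have e3 : (1/4:ℝ) ≤ (1 - pr t)^(2^(t+1)) := quarter_le t
            have f1 : (1:ℝ)/3 ≤ 1 - (1 - pr t)^A.card := by linarith
            have f2 : (1:ℝ)/4 ≤ (1 - pr t)^B.card := le_trans e3 e4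
            nlinarith
          have hpoint : ∀ S ∈ N.powerset,
              mu N (pr t) S * (if (S ∩ A).Nonempty ∧ S ∩ B = ∅ then (1:ℝ) else 0)
                  * (R (t+1) - R t)
                ≤ mu N (pr t) S * |dS δ cx S - dS δ cy S| := by
            intro S hS
            by_cases hev : (S ∩ A).Nonempty ∧ S ∩ B = ∅
            · obtain ⟨⟨z0, hz0⟩, hmiss⟩ := id hev
              have hz0S : z0 ∈ S := (Finset.mem_inter.1 hz0).1
              have hz0A : z0 ∈ A := (Finset.mem_inter.1 hz0).2
              have hup : dS δ cx S ≤ R t :=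
                le_trans (dS_le δ cx z0 S hz0S) (Finset.mem_filter.1 hz0A).2
              have hlo : R (t+1) ≤ dS δ cy S := by
                apply le_dS δ cy S ⟨z0, hz0S⟩
                intro z hzS
                by_contra hzc
                push_neg at hzc
                have hzN : z ∈ N := Finset.mem_powerset.1 hS hzS
                have : z ∈ S ∩ B :=
                  Finset.mem_inter.2 ⟨hzS, Finset.mem_filter.2 ⟨hzN, hzc⟩⟩
                rw [hmiss] at this
                exact absurd this (Finset.notMem_empty z)
              have habs : R (t+1) - R t ≤ |dS δ cx S - dS δ cy S| := by
                rw [abs_sub_comm]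
                calc R (t+1) - R t ≤ dS δ cy S - dS δ cx S := by linarith
                  _ ≤ |dS δ cy S - dS δ cx S| := le_abs_self _
              rw [if_pos hev, mul_one]
              exact mul_le_mul_of_nonneg_left habs (hμnn t S)
            · rw [if_neg hev]
              rw [mul_zero, zero_mul]
              exact mul_nonneg (hμnn t S) (abs_nonneg _)
          calc (R (t+1) - R t)/12
              ≤ (R (t+1) - R t) * ((1 - (1 - pr t) ^ A.card) * (1 - pr t) ^ B.card) := by
                nlinarith [hprob, hlt]
            _ = ∑ S ∈ N.powerset, mu N (pr t) S
                  * (if (S ∩ A).Nonempty ∧ S ∩ B = ∅ then (1:ℝ) else 0) * (R (t+1) - R t) := by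
                rw [← hevent, mul_comm, Finset.sum_mul]
            _ ≤ ∑ S ∈ N.powerset, mu N (pr t) S * |dS δ cx S - dS δ cy S| :=
                Finset.sum_le_sum hpoint
        rcases hsmall with hs | hs
        · -- open ball around x is small: hit around y, miss around x
          have hcore := core y x hy hx (hsymm y hy x hx) hcond.2 hs
          refine hcore.trans (le_of_eq ?_)
          apply Finset.sum_congr rfl
          intro S _
          rw [abs_sub_comm]
        · exact core x y hx hy rfl hcond.1 hs
    -- sum up
    have htele : ∑ t ∈ Finset.range T, (R (t+1) - R t) = δ x y / 4 := by
      rw [Finset.sum_range_sub R T, hRT, hR0, sub_zero]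
    have hsum : δ x y / 48
        ≤ ∑ t ∈ Finset.range T, ∑ S ∈ N.powerset, mu N (pr t) S * |dS δ x S - dS δ y S| := by
      calc δ x y / 48 = (∑ t ∈ Finset.range T, (R (t+1) - R t)) / 12 := by
            rw [htele]; ring
        _ = ∑ t ∈ Finset.range T, (R (t+1) - R t)/12 := Finset.sum_div _ _ _
        _ ≤ _ := Finset.sum_le_sum (fun t _ => key t)
    calc δ x y = 48 * (δ x y / 48) := by ring
      _ ≤ 48 * ∑ t ∈ Finset.range T, ∑ S ∈ N.powerset, mu N (pr t) S * |dS δ x S - dS δ y S| := by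
          linarith
      _ = ∑ t ∈ Finset.range T, ∑ S ∈ N.powerset,
            48 * (mu N (pr t) S * |dS δ x S - dS δ y S|) := by
          rw [Finset.mul_sum]
          apply Finset.sum_congr rfl
          intro t _
          rw [Finset.mul_sum]
  · -- upper bound
    intro x hx y hy
    beta_reduce
    rw [sumId x y]
    have hLip : ∀ S ∈ N.powerset, |dS δ x S - dS δ y S| ≤ δ x y := by
      intro S hS
      have hSN : S ⊆ N := Finset.mem_powerset.1 hS
      by_cases hSne : S.Nonempty
      · rw [abs_sub_le_iff]
        constructor
        · obtain ⟨zy, hzy, hzye⟩ := dS_attained δ y S hSne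
          have h1 : dS δ x S ≤ δ x zy := dS_le δ x zy S hzy
          have h2 : δ x zy ≤ δ x y + δ y zy := htri x hx y hy zy (hSN hzy)
          rw [hzye]
          linarith
        · obtain ⟨zx, hzx, hzxe⟩ := dS_attained δ x S hSne
          have h1 : dS δ y S ≤ δ y zx := dS_le δ y zx S hzx
          have h2 : δ y zx ≤ δ y x + δ x zx := htri y hy x hx zx (hSN hzx)
          have h3 : δ y x = δ x y := hsymm y hy x hx
          rw [hzxe]
          linarith
      · have : S = ∅ := Finset.not_nonempty_iff_eq_empty.1 hSne
        subst this
        simp [dS]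
        exact hnn x hx y hy
    calc ∑ t ∈ Finset.range T, ∑ S ∈ N.powerset,
          48 * (mu N (pr t) S * |dS δ x S - dS δ y S|)
        ≤ ∑ t ∈ Finset.range T, ∑ S ∈ N.powerset, 48 * (mu N (pr t) S * δ x y) := by
          apply Finset.sum_le_sum
          intro t _
          apply Finset.sum_le_sum
          intro S hS
          have := hμnn t S
          have := hLip S hS
          nlinarith [hμnn t S, hLip S hS, abs_nonneg (dS δ x S - dS δ y S)]
      _ = ∑ t ∈ Finset.range T, 48 * δ x y := by
          apply Finset.sum_congr rfl
          intro t _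
          have hre : ∑ S ∈ N.powerset, 48 * (mu N (pr t) S * δ x y)
              = 48 * δ x y * ∑ S ∈ N.powerset, mu N (pr t) S := by
            rw [Finset.mul_sum]
            apply Finset.sum_congr rfl
            intro S _
            ring
          rw [hre, sum_mu, mul_one]
      _ = 48 * ((Nat.log 2 N.card : ℝ) + 1) * δ x y := by
          rw [Finset.sum_const, Finset.card_range]
          rw [hT]
          push_cast
          ring


lemma dS_nonneg {V : Type} (δ : V → V → ℝ) (x : V) (S : Finset V)
    (h : ∀ z ∈ S, 0 ≤ δ x z) : 0 ≤ dS δ x S := by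
  rw [dS]
  by_cases hS : S.Nonempty
  · rw [dif_pos hS]
    apply Finset.le_min'
    intro ρ hρ
    obtain ⟨z, hz, rfl⟩ := Finset.mem_image.1 hρ
    exact h z hz
  · rw [dif_neg hS]

lemma net_exists {V : Type} [DecidableEq V] (δ : V → V → ℝ) (r : V → ℝ)
    (hself : ∀ a, δ a a = 0) (hrnn : ∀ a, 0 ≤ r a) (hsy : ∀ a b, δ a b = δ b a) :
    ∀ (F : Finset V), ∃ N, N ⊆ F ∧
      (∀ a ∈ F, ∃ z ∈ N, δ a z ≤ 2 * r a ∧ r z ≤ r a) ∧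
      (∀ z ∈ N, ∀ z' ∈ N, z ≠ z' → r z + r z' < δ z z') := by
  intro F
  induction F using Finset.strongInduction with
  | _ F ih =>
    rcases Finset.eq_empty_or_nonempty F with rfl | hFne
    · refine ⟨∅, Finset.Subset.refl _, ?_, ?_⟩
      · intro a ha; exact absurd ha (Finset.notMem_empty a)
      · intro z hz; exact absurd hz (Finset.notMem_empty z)
    · obtain ⟨a0, ha0, hmin⟩ := F.exists_min_image r hFne
      have hssub : F.filter (fun a => ¬ δ a a0 ≤ 2 * r a) ⊂ F := by
        apply Finset.filter_ssubset.2
        refine ⟨a0, ha0, ?_⟩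
        push_neg
        rw [hself a0]
        have := hrnn a0
        linarith
      obtain ⟨N', hN'sub, hserve, hsep⟩ := ih _ hssub
      refine ⟨insert a0 N', ?_, ?_, ?_⟩
      · intro z hz
        rcases Finset.mem_insert.1 hz with rfl | hz'
        · exact ha0
        · exact Finset.mem_of_mem_filter z (hN'sub hz')
      · intro a ha
        by_cases hc : δ a a0 ≤ 2 * r a
        · exact ⟨a0, Finset.mem_insert_self _ _, hc, hmin a ha⟩
        · obtain ⟨z, hzN, hz1, hz2⟩ := hserve a (Finset.mem_filter.2 ⟨ha, hc⟩)
          exact ⟨z, Finset.mem_insert_of_mem hzN, hz1, hz2⟩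
      · intro z hz z' hz' hne
        have hsepd : ∀ u ∈ N', r a0 + r u < δ a0 u := by
          intro u hu
          have huF' := hN'sub hu
          obtain ⟨huF, hcu⟩ := Finset.mem_filter.1 huF'
          push_neg at hcu
          have hru : r a0 ≤ r u := hmin u huF
          rw [hsy a0 u]
          linarith
        rcases Finset.mem_insert.1 hz with rfl | hzN
        · rcases Finset.mem_insert.1 hz' with rfl | hz'N
          · exact absurd rfl hne
          · exact hsepd z' hz'N
        · rcases Finset.mem_insert.1 hz' with rfl | hz'N
          · have hzz := hsepd z hzN
            rw [hsy z' z] at hzz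
            linarith
          · exact hsep z hzN z' hz'N hne

lemma net_card {V : Type} [Fintype V] [DecidableEq V] (δ : V → V → ℝ)
    (htri : ∀ a b c, δ a c ≤ δ a b + δ b c) (hsy : ∀ a b, δ a b = δ b a)
    (N : Finset V) (r : V → ℝ)
    (hsep : ∀ z ∈ N, ∀ z' ∈ N, z ≠ z' → r z + r z' < δ z z')
    {K : ℝ}
    (hball : ∀ z ∈ N, K ≤ ((Finset.univ.filter (fun v => δ z v ≤ r z)).card : ℝ)) :
    (N.card : ℝ) * K ≤ (Fintype.card V : ℝ) := by
  set ball : V → Finset V := fun z => Finset.univ.filter (fun v => δ z v ≤ r z) with hballdef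
  have hdisj : ∀ z ∈ N, ∀ z' ∈ N, z ≠ z' → Disjoint (ball z) (ball z') := by
    intro z hz z' hz' hne
    rw [Finset.disjoint_left]
    intro v hv hv'
    have h1 := (Finset.mem_filter.1 hv).2
    have h2 := (Finset.mem_filter.1 hv').2
    have h3 : δ z z' ≤ δ z v + δ v z' := htri z v z'
    have h4 : δ v z' = δ z' v := hsy v z'
    have h5 := hsep z hz z' hz' hne
    linarith
  have hcard : (N.biUnion ball).card = ∑ z ∈ N, (ball z).card :=
    Finset.card_biUnion hdisj
  calc (N.card : ℝ) * K = ∑ _z ∈ N, K := by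
        rw [Finset.sum_const, nsmul_eq_mul]
    _ ≤ ∑ z ∈ N, ((ball z).card : ℝ) := Finset.sum_le_sum hball
    _ = ((∑ z ∈ N, (ball z).card : ℕ) : ℝ) := by push_cast; ring
    _ = ((N.biUnion ball).card : ℝ) := by rw [hcard]
    _ ≤ (Fintype.card V : ℝ) := by
        exact_mod_cast Finset.card_le_univ _


end Prob
end LDE

/-- There is a universal constant `C` such that the following holds. Let `G = (V, E, w)` be a
finite weighted undirected graph with `n` vertices, `d` its shortest-path metric w.r.t. `w` and
`d_unw = G.dist` its shortest-path metric w.r.t. unit weights. Then for every `ε ∈ (0, 1/2)`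
there exist `m ∈ ℕ` and `f : V → (ℝ^m, ℓ1)` with `ε`-distortion at most `C · log(1/ε)`:
`‖f v1 − f v2‖₁ ≥ d(v1, v2)` for all `v1, v2`, and
`‖f v1 − f v2‖₁ ≤ C · log(1/ε) · d(v1, v2)` whenever `d_unw(v1, v2) ≥ ε·n`. -/
theorem large_distance_l1_embedding_general :
    ∃ C : ℝ, 0 < C ∧
      ∀ (V : Type) [Fintype V] (G : SimpleGraph V) (w : Sym2 V → ℝ),
        (∀ e ∈ G.edgeSet, 0 < w e) →
        ∀ d : V → V → ℝ,
        (∀ u v : V,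
          IsLeast {x : ℝ | ∃ p : G.Walk u v, p.IsPath ∧ G.walkWeight w p = x} (d u v)) →
        ∀ ε : ℝ, 0 < ε → ε < 1 / 2 →
          ∃ (m : ℕ) (f : V → (Fin m → ℝ)),
            (∀ v1 v2 : V, d v1 v2 ≤ ∑ i, |f v1 i - f v2 i|) ∧
            (∀ v1 v2 : V, ε * (Fintype.card V : ℝ) ≤ (G.dist v1 v2 : ℝ) →
              ∑ i, |f v1 i - f v2 i| ≤ C * Real.log (1 / ε) * d v1 v2) := by
  classical
  refine ⟨1000, by norm_num, ?_⟩
  intro V _ G w hw d hd ε hε hε2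
  have dsymm : ∀ u v : V, d u v = d v u := LDE.d_symm G w d hw hd
  have dtri : ∀ u x v : V, d u v ≤ d u x + d x v := LDE.d_triangle G w d hw hd
  have dnn : ∀ u v : V, 0 ≤ d u v := LDE.d_nonneg G w d hw hd
  have dself : ∀ u : V, d u u = 0 := LDE.d_self G w d hw hd
  have dpos : ∀ u v : V, u ≠ v → 0 < d u v := fun u v h => LDE.d_pos G w d hw hd h
  by_cases hfar : ∃ a b : V, ε * (Fintype.card V : ℝ) ≤ (G.dist a b : ℝ)
  case neg =>
    push_neg at hfar
    set M : ℝ := ∑ u : V, ∑ v' : V, |d u v'| with hM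
    have hMnn : 0 ≤ M :=
      Finset.sum_nonneg fun u _ => Finset.sum_nonneg fun v' _ => abs_nonneg _
    have hMge : ∀ u v' : V, |d u v'| ≤ M := by
      intro u v'
      calc |d u v'| ≤ ∑ y : V, |d u y| :=
            Finset.single_le_sum (f := fun y => |d u y|)
              (fun y _ => abs_nonneg _) (Finset.mem_univ v')
        _ ≤ M := Finset.single_le_sum (f := fun u' => ∑ y : V, |d u' y|)
            (fun u' _ => Finset.sum_nonneg fun y _ => abs_nonneg _) (Finset.mem_univ u)
    refine ⟨Fintype.card V, fun v j => if j = Fintype.equivFin V v then M else 0, ?_, ?_⟩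
    · intro v1 v2
      by_cases h12 : v1 = v2
      · subst h12
        rw [dself v1]
        exact Finset.sum_nonneg fun j _ => abs_nonneg _
      · have hne : Fintype.equivFin V v1 ≠ Fintype.equivFin V v2 :=
          fun hc => h12 ((Fintype.equivFin V).injective hc)
        calc d v1 v2 ≤ |d v1 v2| := le_abs_self _
          _ ≤ M := hMge v1 v2
          _ = |(if (Fintype.equivFin V v1) = Fintype.equivFin V v1 then M else 0)
                - (if (Fintype.equivFin V v1) = Fintype.equivFin V v2 then M else 0)| := by
              rw [if_pos rfl, if_neg hne, sub_zero, abs_of_nonneg hMnn]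
          _ ≤ ∑ j, |(if j = Fintype.equivFin V v1 then M else 0)
                - (if j = Fintype.equivFin V v2 then M else 0)| :=
              Finset.single_le_sum
                (f := fun j => |(if j = Fintype.equivFin V v1 then M else 0)
                  - (if j = Fintype.equivFin V v2 then M else 0)|)
                (fun j _ => abs_nonneg _) (Finset.mem_univ (Fintype.equivFin V v1))
    · intro v1 v2 hcond
      exact absurd hcond (not_le.2 (hfar v1 v2))
  case pos =>
    obtain ⟨a0, b0, hfar0⟩ := hfar
    have hn0 : 0 < Fintype.card V := @Fintype.card_pos V _ ⟨a0⟩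
    have hn0' : (0:ℝ) < (Fintype.card V : ℝ) := by exact_mod_cast hn0
    have hεn : 0 < ε * (Fintype.card V : ℝ) := mul_pos hε hn0'
    set P : V → Finset V :=
      fun a => Finset.univ.filter (fun b => ε * (Fintype.card V : ℝ) ≤ (G.dist a b : ℝ))
      with hPdef
    set F : Finset V := Finset.univ.filter (fun a => (P a).Nonempty) with hFdef
    set r : V → ℝ := fun a => LDE.dS d a (P a) with hrdef
    have hrnn : ∀ a, 0 ≤ r a := fun a => LDE.dS_nonneg d a (P a) (fun z _ => dnn a z)
    have hrle : ∀ a b, b ∈ P a → r a ≤ d a b := fun a b hb => LDE.dS_le d a b (P a) hb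
    have hmemP : ∀ a b : V, ε * (Fintype.card V : ℝ) ≤ (G.dist a b : ℝ) → b ∈ P a := by
      intro a b h
      simp only [hPdef, Finset.mem_filter, Finset.mem_univ, true_and]
      exact h
    have hmemF : ∀ a b : V, ε * (Fintype.card V : ℝ) ≤ (G.dist a b : ℝ) → a ∈ F := by
      intro a b h
      simp only [hFdef, Finset.mem_filter, Finset.mem_univ, true_and]
      exact ⟨b, hmemP a b h⟩
    have hballs : ∀ a ∈ F, ε * (Fintype.card V : ℝ)
        ≤ ((Finset.univ.filter (fun v => d a v ≤ r a)).card : ℝ) := by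
      intro a ha
      have hPa : (P a).Nonempty := (Finset.mem_filter.1 ha).2
      obtain ⟨b, hbP, hbe⟩ := LDE.dS_attained d a (P a) hPa
      have hbfar : ε * (Fintype.card V : ℝ) ≤ (G.dist a b : ℝ) := by
        have := Finset.mem_filter.1 hbP
        simpa [hPdef] using this.2
      have hre : r a = d a b := hbe
      rw [hre]
      exact LDE.far_ball_card G w d hw hd hbfar
    obtain ⟨N, hNF, hserve, hsep⟩ := LDE.net_exists d r dself hrnn dsymm F
    have hNne : N.Nonempty := by
      obtain ⟨z, hzN, _, _⟩ := hserve a0 (hmemF a0 b0 hfar0)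
      exact ⟨z, hzN⟩
    have hk1 : 1 ≤ N.card := Finset.card_pos.2 hNne
    have hcardN : (N.card : ℝ) * (ε * (Fintype.card V : ℝ)) ≤ (Fintype.card V : ℝ) :=
      LDE.net_card d (fun a b c => dtri a b c) dsymm N r hsep
        (fun z hz => hballs z (hNF hz))
    have hkε : (N.card : ℝ) ≤ 1/ε := by
      rw [le_div_iff₀ hε]
      have h1 : (N.card:ℝ) * ε * (Fintype.card V : ℝ) ≤ 1 * (Fintype.card V : ℝ) := by
        rw [one_mul]
        calc (N.card:ℝ) * ε * (Fintype.card V : ℝ)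
            = (N.card : ℝ) * (ε * (Fintype.card V : ℝ)) := by ring
          _ ≤ _ := hcardN
      exact le_of_mul_le_mul_right h1 hn0'
    have hπex : ∀ v : V, ∃ z, z ∈ N ∧ ∀ z' ∈ N, d v z ≤ d v z' := by
      intro v
      obtain ⟨z, hz, hmin⟩ := N.exists_min_image (d v) hNne
      exact ⟨z, hz, hmin⟩
    choose π hπN hπmin using hπex
    set ρ : V → ℝ := fun v => d v (π v) with hρdef
    have hρnn : ∀ v, 0 ≤ ρ v := fun v => dnn v (π v)
    obtain ⟨g, hglow, hgup⟩ := LDE.bourgain_net N d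
      (fun x _ y _ => dsymm x y) (fun x _ y _ z _ => dtri x y z)
      (fun x _ y _ => dnn x y) (fun x _ => dself x) (fun x _ y _ hne => dpos x y hne)
    have hgnn : ∀ v1 v2 : V,
        (0:ℝ) ≤ ∑ p : Fin (Nat.log 2 N.card + 1) × {S : Finset V // S ∈ N.powerset},
          |g (π v1) p - g (π v2) p| :=
      fun v1 v2 => Finset.sum_nonneg fun p _ => abs_nonneg _
    set f0 : V → ((Fin (Nat.log 2 N.card + 1) × {S : Finset V // S ∈ N.powerset}) ⊕ V) → ℝ :=
      fun v => Sum.elim (g (π v)) (fun u => if u = v then ρ v else 0) with hf0def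
    have hsplit : ∀ v1 v2 : V,
        (∑ i : (Fin (Nat.log 2 N.card + 1) × {S : Finset V // S ∈ N.powerset}) ⊕ V,
          |f0 v1 i - f0 v2 i|)
        = (∑ p : Fin (Nat.log 2 N.card + 1) × {S : Finset V // S ∈ N.powerset},
            |g (π v1) p - g (π v2) p|)
          + ∑ u : V, |(if u = v1 then ρ v1 else 0) - (if u = v2 then ρ v2 else 0)| := by
      intro v1 v2
      rw [Fintype.sum_sum_type]
      simp only [hf0def, Sum.elim_inl, Sum.elim_inr]
    have hdiag : ∀ v1 v2 : V, v1 ≠ v2 →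
        (∑ u : V, |(if u = v1 then ρ v1 else 0) - (if u = v2 then ρ v2 else 0)|)
          = ρ v1 + ρ v2 := by
      intro v1 v2 h12
      rw [← Finset.sum_subset (Finset.subset_univ ({v1, v2} : Finset V))]
      · rw [Finset.sum_pair h12]
        rw [if_pos rfl, if_neg h12, if_neg (Ne.symm h12), if_pos rfl]
        rw [sub_zero, zero_sub, abs_neg, abs_of_nonneg (hρnn v1), abs_of_nonneg (hρnn v2)]
      · intro u _ hu
        simp only [Finset.mem_insert, Finset.mem_singleton] at hu
        push_neg at hu
        rw [if_neg hu.1, if_neg hu.2, sub_zero, abs_zero]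
    have hsum : ∀ v1 v2 : V,
        (∑ j, |f0 v1 ((Fintype.equivFin _).symm j) - f0 v2 ((Fintype.equivFin _).symm j)|)
          = ∑ i, |f0 v1 i - f0 v2 i| :=
      fun v1 v2 => Equiv.sum_comp (Fintype.equivFin _).symm (fun i => |f0 v1 i - f0 v2 i|)
    refine ⟨_, fun v j => f0 v ((Fintype.equivFin _).symm j), ?_, ?_⟩
    · intro v1 v2
      beta_reduce
      rw [hsum v1 v2, hsplit v1 v2]
      by_cases h12 : v1 = v2
      · subst h12
        rw [dself v1]
        have := hgnn v1 v1
        have : (0:ℝ) ≤ ∑ u : V, |(if u = v1 then ρ v1 else 0) - (if u = v1 then ρ v1 else 0)| :=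
          Finset.sum_nonneg fun u _ => abs_nonneg _
        linarith [hgnn v1 v1]
      · rw [hdiag v1 v2 h12]
        have h1 : d v1 v2 ≤ d v1 (π v1) + d (π v1) v2 := dtri _ _ _
        have h2 : d (π v1) v2 ≤ d (π v1) (π v2) + d (π v2) v2 := dtri _ _ _
        have h3 : d (π v2) v2 = d v2 (π v2) := dsymm _ _
        have h4 := hglow (π v1) (hπN v1) (π v2) (hπN v2)
        have hρ1 : ρ v1 = d v1 (π v1) := rfl
        have hρ2 : ρ v2 = d v2 (π v2) := rfl
        linarith
    · intro v1 v2 hcond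
      beta_reduce
      rw [hsum v1 v2, hsplit v1 v2]
      have h12 : v1 ≠ v2 := by
        intro h
        subst h
        rw [SimpleGraph.dist_self] at hcond
        norm_num at hcond
        linarith
      rw [hdiag v1 v2 h12]
      have hv2P : v2 ∈ P v1 := hmemP v1 v2 hcond
      have hv1P : v1 ∈ P v2 := by
        apply hmemP
        rwa [SimpleGraph.dist_comm]
      have hρle : ∀ a b : V, a ∈ F → ρ a ≤ 2 * r a := by
        intro a b ha
        obtain ⟨z, hzN, hz1, _⟩ := hserve a ha
        calc ρ a = d a (π a) := rfl
          _ ≤ d a z := hπmin a z hzN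
          _ ≤ 2 * r a := hz1
      have hρ1 : ρ v1 ≤ 2 * r v1 := hρle v1 v2 (hmemF v1 v2 hcond)
      have hρ2 : ρ v2 ≤ 2 * r v2 := by
        apply hρle v2 v1
        apply hmemF v2 v1
        rwa [SimpleGraph.dist_comm]
      have hr1 : r v1 ≤ d v1 v2 := hrle v1 v2 hv2P
      have hr2 : r v2 ≤ d v1 v2 := by
        have := hrle v2 v1 hv1P
        rwa [← dsymm v1 v2] at this
      have hππ : d (π v1) (π v2) ≤ ρ v1 + d v1 v2 + ρ v2 := by
        have h1 : d (π v1) (π v2) ≤ d (π v1) v1 + d v1 (π v2) := dtri _ _ _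
        have h2 : d v1 (π v2) ≤ d v1 v2 + d v2 (π v2) := dtri _ _ _
        have h3 : d (π v1) v1 = d v1 (π v1) := dsymm _ _
        have hρ1' : ρ v1 = d v1 (π v1) := rfl
        have hρ2' : ρ v2 = d v2 (π v2) := rfl
        linarith
      have hππ5 : d (π v1) (π v2) ≤ 5 * d v1 v2 := by linarith
      set Lg : ℝ := (Nat.log 2 N.card : ℝ) with hLgdef
      have hLgnn : 0 ≤ Lg := Nat.cast_nonneg _
      have hgup2 : (∑ p : Fin (Nat.log 2 N.card + 1) × {S : Finset V // S ∈ N.powerset},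
            |g (π v1) p - g (π v2) p|) ≤ 48 * (Lg + 1) * (5 * d v1 v2) := by
        refine le_trans (hgup (π v1) (hπN v1) (π v2) (hπN v2)) ?_
        apply mul_le_mul_of_nonneg_left hππ5
        positivity
      -- logarithm facts
      set L : ℝ := Real.log (1/ε) with hLdef
      have hinv2 : (2:ℝ) ≤ 1/ε := by
        rw [le_div_iff₀ hε]
        linarith
      have hL2 : Real.log 2 ≤ L := Real.log_le_log (by norm_num) hinv2
      have hlog2 : (0.6931471803:ℝ) < Real.log 2 := Real.log_two_gt_d9
      have hLpos : (0.69:ℝ) ≤ L := by linarith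
      have hLgL : Lg * 0.69 ≤ L := by
        have hk0 : N.card ≠ 0 := by omega
        have h2k : (2:ℝ)^(Nat.log 2 N.card) ≤ (N.card : ℝ) := by
          exact_mod_cast Nat.pow_log_le_self 2 hk0
        have hlogpow : Real.log ((2:ℝ)^(Nat.log 2 N.card)) = Lg * Real.log 2 := by
          rw [Real.log_pow]
        have hstep1 : Lg * Real.log 2 ≤ Real.log (N.card : ℝ) := by
          rw [← hlogpow]
          apply Real.log_le_log (by positivity) h2k
        have hstep2 : Real.log (N.card : ℝ) ≤ L := by
          apply Real.log_le_log (by exact_mod_cast hk1) hkε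
        have hmul : Lg * 0.69 ≤ Lg * Real.log 2 :=
          mul_le_mul_of_nonneg_left (by linarith) hLgnn
        linarith
      have hd0 : 0 ≤ d v1 v2 := dnn v1 v2
      have hclaim : 48 * (Lg + 1) * 5 + 4 ≤ 1000 * L := by nlinarith [hLgL, hLpos, hLgnn]
      calc (∑ p : Fin (Nat.log 2 N.card + 1) × {S : Finset V // S ∈ N.powerset},
              |g (π v1) p - g (π v2) p|) + (ρ v1 + ρ v2)
          ≤ 48 * (Lg + 1) * (5 * d v1 v2) + (2 * d v1 v2 + 2 * d v1 v2) := by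
            have e1 : ρ v1 ≤ 2 * d v1 v2 := by linarith
            have e2 : ρ v2 ≤ 2 * d v1 v2 := by linarith
            linarith [hgup2]
        _ = (48 * (Lg + 1) * 5 + 4) * d v1 v2 := by ring
        _ ≤ (1000 * L) * d v1 v2 := mul_le_mul_of_nonneg_right hclaim hd0
        _ = 1000 * Real.log (1/ε) * d v1 v2 := by rw [hLdef]
end

section
/- There is a universal constant C such that every finite metric space (V, d) with n ≥ 2 points admits, for some m ∈ ℕ, a map f : V → ℝ^m with d(v1, v2) ≤ ‖f(v1) − f(v2)‖₁ ≤ C · log n · d(v1, v2) for all v1, v2 ∈ V. -/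
set_option linter.unusedSectionVars false
set_option maxHeartbeats 1000000

open Finset
open scoped Classical

namespace BourgainAux

variable {V : Type} [Fintype V] [MetricSpace V]

/-- Bernoulli(p) weight of a subset `S` of `V`. -/
noncomputable def bw (p : ℝ) (S : Finset V) : ℝ :=
  p ^ S.card * (1 - p) ^ (Fintype.card V - S.card)

lemma bw_nonneg {p : ℝ} (hp0 : 0 ≤ p) (hp1 : p ≤ 1) (S : Finset V) : 0 ≤ bw p S :=
  mul_nonneg (pow_nonneg hp0 _) (pow_nonneg (by linarith) _)

lemma sum_pow_powerset (p q : ℝ) (A : Finset V) :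
    ∑ S ∈ A.powerset, p ^ S.card * q ^ (A.card - S.card) = (p + q) ^ A.card := by
  calc ∑ S ∈ A.powerset, p ^ S.card * q ^ (A.card - S.card)
      = ∑ S ∈ A.powerset, (∏ _i ∈ S, p) * ∏ _i ∈ A \ S, q := by
        refine Finset.sum_congr rfl fun S hS => ?_
        rw [Finset.mem_powerset] at hS
        rw [Finset.prod_const, Finset.prod_const, Finset.card_sdiff_of_subset hS]
    _ = ∏ _i ∈ A, (p + q) := (Finset.prod_add _ _ _).symm
    _ = (p + q) ^ A.card := Finset.prod_const _

lemma sum_bw_miss (p : ℝ) (B : Finset V) :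
    ∑ S : Finset V, (if Disjoint S B then bw p S else 0) = (1 - p) ^ B.card := by
  rw [← Finset.sum_filter]
  have hfil : (univ : Finset (Finset V)).filter (fun S => Disjoint S B) = Bᶜ.powerset := by
    ext S
    simp only [Finset.mem_filter, Finset.mem_univ, true_and, Finset.mem_powerset]
    constructor
    · intro h x hx
      rw [Finset.mem_compl]
      exact fun hxB => (Finset.disjoint_left.1 h) hx hxB
    · intro h
      exact Finset.disjoint_left.2 fun {x} hx hxB => (Finset.mem_compl.1 (h hx)) hxB
  rw [hfil]
  have hterm : ∀ S ∈ Bᶜ.powerset,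
      bw p S = (1 - p) ^ B.card * (p ^ S.card * (1 - p) ^ (Bᶜ.card - S.card)) := by
    intro S hS
    rw [Finset.mem_powerset] at hS
    have h1 : S.card ≤ Bᶜ.card := Finset.card_le_card hS
    have h2 : Bᶜ.card = Fintype.card V - B.card := Finset.card_compl B
    have h3 : B.card ≤ Fintype.card V := Finset.card_le_univ B
    have h4 : Fintype.card V - S.card = (Bᶜ.card - S.card) + B.card := by omega
    rw [bw, h4, pow_add]; ring
  rw [Finset.sum_congr rfl hterm, ← Finset.mul_sum, sum_pow_powerset]
  have : p + (1 - p) = 1 := by ring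
  rw [this, one_pow, mul_one]

lemma sum_bw_one (p : ℝ) : ∑ S : Finset V, bw p S = 1 := by
  have h := sum_bw_miss (V := V) p ∅
  simpa using h

lemma sum_bw_event (p : ℝ) {A B : Finset V} (hAB : Disjoint A B) :
    ∑ S : Finset V, (if (S ∩ A).Nonempty ∧ Disjoint S B then bw p S else 0)
      = (1 - p) ^ B.card - (1 - p) ^ (A.card + B.card) := by
  have key : ∀ S : Finset V,
      (if (S ∩ A).Nonempty ∧ Disjoint S B then bw p S else 0)
        = (if Disjoint S B then bw p S else 0)
          - (if Disjoint S (A ∪ B) then bw p S else 0) := by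
    intro S
    simp only [← Finset.not_disjoint_iff_nonempty_inter, Finset.disjoint_union_right]
    by_cases hA : Disjoint S A <;> by_cases hB : Disjoint S B <;> simp [hA, hB]
  rw [Finset.sum_congr rfl fun S _ => key S, Finset.sum_sub_distrib,
    sum_bw_miss, sum_bw_miss, Finset.card_union_of_disjoint hAB]

/-- distance from a point to a finite set (0 if empty) -/
noncomputable def dS (x : V) (S : Finset V) : ℝ :=
  if h : S.Nonempty then S.inf' h (fun y => dist x y) else 0

lemma dS_le {S : Finset V} (x : V) {y : V} (hy : y ∈ S) : dS x S ≤ dist x y := by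
  rw [dS, dif_pos ⟨y, hy⟩]
  exact Finset.inf'_le _ hy

lemma le_dS {S : Finset V} (x : V) (hS : S.Nonempty) {r : ℝ}
    (h : ∀ y ∈ S, r ≤ dist x y) : r ≤ dS x S := by
  rw [dS, dif_pos hS]
  exact Finset.le_inf' hS _ h

lemma abs_dS_sub_le (u v : V) (S : Finset V) : |dS u S - dS v S| ≤ dist u v := by
  by_cases hS : S.Nonempty
  · rw [abs_sub_le_iff]
    constructor
    · obtain ⟨y, hy, hye⟩ := Finset.exists_mem_eq_inf' hS (fun y => dist v y)
      have h1 : dS u S ≤ dist u y := dS_le u hy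
      have h2 : dS v S = dist v y := by rw [dS, dif_pos hS, hye]
      have := dist_triangle u v y
      linarith
    · obtain ⟨y, hy, hye⟩ := Finset.exists_mem_eq_inf' hS (fun y => dist u y)
      have h1 : dS v S ≤ dist v y := dS_le v hy
      have h2 : dS u S = dist u y := by rw [dS, dif_pos hS, hye]
      have := dist_triangle v u y
      rw [dist_comm v u] at this
      linarith
  · simp [dS, dif_neg hS, dist_nonneg]

/-- closed ball as a Finset -/
noncomputable def Bc (w : V) (r : ℝ) : Finset V := univ.filter fun x => dist x w ≤ r
/-- open ball as a Finset -/
noncomputable def Bo (w : V) (r : ℝ) : Finset V := univ.filter fun x => dist x w < r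

noncomputable def Nc (u v : V) (r : ℝ) : ℕ := min (Bc u r).card (Bc v r).card

noncomputable def cand (u v : V) (k : ℕ) : Finset ℝ :=
  ((univ.image fun x => dist x u) ∪ (univ.image fun x => dist x v) ∪ {dist u v / 2}).filter
    fun r => 0 ≤ r ∧ r ≤ dist u v / 2 ∧ (r = dist u v / 2 ∨ 2 ^ k ≤ Nc u v r)

lemma cand_nonempty (u v : V) (k : ℕ) : (cand u v k).Nonempty := by
  refine ⟨dist u v / 2, Finset.mem_filter.2 ⟨?_, ?_, le_refl _, Or.inl rfl⟩⟩
  · exact Finset.mem_union_right _ (Finset.mem_singleton_self _)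
  · have := dist_nonneg (x := u) (y := v); linarith

noncomputable def rho (u v : V) (k : ℕ) : ℝ := (cand u v k).min' (cand_nonempty u v k)

lemma rho_mem (u v : V) (k : ℕ) : rho u v k ∈ cand u v k := Finset.min'_mem _ _

lemma rho_nonneg (u v : V) (k : ℕ) : 0 ≤ rho u v k :=
  (Finset.mem_filter.1 (rho_mem u v k)).2.1

lemma rho_le_half (u v : V) (k : ℕ) : rho u v k ≤ dist u v / 2 :=
  (Finset.mem_filter.1 (rho_mem u v k)).2.2.1

lemma rho_spec (u v : V) (k : ℕ) :
    rho u v k = dist u v / 2 ∨ 2 ^ k ≤ Nc u v (rho u v k) :=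
  (Finset.mem_filter.1 (rho_mem u v k)).2.2.2

lemma rho_mono (u v : V) {k l : ℕ} (hkl : k ≤ l) : rho u v k ≤ rho u v l := by
  apply Finset.min'_le
  have h := rho_mem u v l
  simp only [cand, Finset.mem_filter] at h ⊢
  refine ⟨h.1, h.2.1, h.2.2.1, ?_⟩
  rcases h.2.2.2 with h' | h'
  · exact Or.inl h'
  · exact Or.inr (le_trans (pow_le_pow_right₀ one_le_two hkl) h')

lemma rho_zero (u v : V) : rho u v 0 = 0 := by
  have h1 : (0 : ℝ) ∈ cand u v 0 := by
    refine Finset.mem_filter.2 ⟨?_, le_refl _, ?_, Or.inr ?_⟩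
    · exact Finset.mem_union_left _ (Finset.mem_union_left _
        (Finset.mem_image.2 ⟨u, Finset.mem_univ u, by simp⟩))
    · have := dist_nonneg (x := u) (y := v); linarith
    · have hu : u ∈ Bc u (0 : ℝ) := by simp [Bc]
      have hv : v ∈ Bc v (0 : ℝ) := by simp [Bc]
      have h1 : 1 ≤ (Bc u (0:ℝ)).card := Finset.card_pos.2 ⟨u, hu⟩
      have h2 : 1 ≤ (Bc v (0:ℝ)).card := Finset.card_pos.2 ⟨v, hv⟩
      simpa [Nc] using le_min h1 h2
  exact le_antisymm (Finset.min'_le _ _ h1) (rho_nonneg u v 0)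

lemma Nc_le_card (u v : V) (r : ℝ) : Nc u v r ≤ Fintype.card V :=
  le_trans (min_le_left _ _) (by simpa [Bc] using Finset.card_filter_le univ (fun x => dist x u ≤ r))

lemma rho_top (u v : V) {T : ℕ} (hT : Fintype.card V < 2 ^ T) :
    rho u v T = dist u v / 2 := by
  have h := rho_spec u v T
  rcases h with h | h
  · exact h
  · exfalso
    have := Nc_le_card u v (rho u v T)
    omega

lemma Nc_lt_of_lt_rho (u v : V) (k : ℕ) {r : ℝ} (hr0 : 0 ≤ r) (hr : r < rho u v k) :
    Nc u v r < 2 ^ k := by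
  by_contra hcon
  push_neg at hcon
  have hru : u ∈ Bc u r := by simp [Bc, dist_self, hr0]
  have hrv : v ∈ Bc v r := by simp [Bc, dist_self, hr0]
  have hneu : (Bc u r).Nonempty := ⟨u, hru⟩
  have hnev : (Bc v r).Nonempty := ⟨v, hrv⟩
  set su := (Bc u r).sup' hneu (fun x => dist x u) with hsu
  set sv := (Bc v r).sup' hnev (fun x => dist x v) with hsv
  have hsur : su ≤ r := Finset.sup'_le _ _ fun x hx => (Finset.mem_filter.1 hx).2
  have hsvr : sv ≤ r := Finset.sup'_le _ _ fun x hx => (Finset.mem_filter.1 hx).2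
  have hsub_u : Bc u r ⊆ Bc u (max su sv) := by
    intro x hx
    have h1 : dist x u ≤ su := by rw [hsu]; exact Finset.le_sup' (fun x => dist x u) hx
    exact Finset.mem_filter.2 ⟨Finset.mem_univ x, le_trans h1 (le_max_left _ _)⟩
  have hsub_v : Bc v r ⊆ Bc v (max su sv) := by
    intro x hx
    have h1 : dist x v ≤ sv := by rw [hsv]; exact Finset.le_sup' (fun x => dist x v) hx
    exact Finset.mem_filter.2 ⟨Finset.mem_univ x, le_trans h1 (le_max_right _ _)⟩
  have hm0 : (0:ℝ) ≤ max su sv := by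
    have : dist u u ≤ su := by rw [hsu]; exact Finset.le_sup' (fun x => dist x u) hru
    simp [dist_self] at this
    exact le_trans this (le_max_left _ _)
  have hm_mem : max su sv ∈ cand u v k := by
    refine Finset.mem_filter.2 ⟨?_, hm0, ?_, Or.inr ?_⟩
    · rcases le_total sv su with h | h
      · rw [max_eq_left h]
        obtain ⟨x, hx, hxe⟩ := Finset.exists_mem_eq_sup' hneu (fun x => dist x u)
        exact Finset.mem_union_left _ (Finset.mem_union_left _
          (Finset.mem_image.2 ⟨x, Finset.mem_univ x, hxe.symm⟩))
      · rw [max_eq_right h]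
        obtain ⟨x, hx, hxe⟩ := Finset.exists_mem_eq_sup' hnev (fun x => dist x v)
        exact Finset.mem_union_left _ (Finset.mem_union_right _
          (Finset.mem_image.2 ⟨x, Finset.mem_univ x, hxe.symm⟩))
    · have := rho_le_half u v k
      have hmr : max su sv ≤ r := max_le hsur hsvr
      linarith
    · refine le_trans hcon (min_le_min ?_ ?_)
      · exact Finset.card_le_card hsub_u
      · exact Finset.card_le_card hsub_v
  have := Finset.min'_le _ _ hm_mem
  have hmr : max su sv ≤ r := max_le hsur hsvr
  have : rho u v k ≤ r := le_trans this hmr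
  linarith

lemma open_small (u v : V) (k : ℕ) (hpos : 0 < rho u v k) :
    (Bo u (rho u v k)).card < 2 ^ k ∨ (Bo v (rho u v k)).card < 2 ^ k := by
  by_contra hcon
  push_neg at hcon
  obtain ⟨hcu, hcv⟩ := hcon
  have hru : u ∈ Bo u (rho u v k) := by simp [Bo, dist_self, hpos]
  have hrv : v ∈ Bo v (rho u v k) := by simp [Bo, dist_self, hpos]
  have hneu : (Bo u (rho u v k)).Nonempty := ⟨u, hru⟩
  have hnev : (Bo v (rho u v k)).Nonempty := ⟨v, hrv⟩
  set su := (Bo u (rho u v k)).sup' hneu (fun x => dist x u) with hsu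
  set sv := (Bo v (rho u v k)).sup' hnev (fun x => dist x v) with hsv
  have hsur : su < rho u v k := by
    rw [hsu, Finset.sup'_lt_iff]
    exact fun x hx => (Finset.mem_filter.1 hx).2
  have hsvr : sv < rho u v k := by
    rw [hsv, Finset.sup'_lt_iff]
    exact fun x hx => (Finset.mem_filter.1 hx).2
  have hm0 : (0:ℝ) ≤ max su sv := by
    have : dist u u ≤ su := by rw [hsu]; exact Finset.le_sup' (fun x => dist x u) hru
    simp [dist_self] at this
    exact le_trans this (le_max_left _ _)
  have hsub_u : Bo u (rho u v k) ⊆ Bc u (max su sv) := by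
    intro x hx
    have h1 : dist x u ≤ su := by rw [hsu]; exact Finset.le_sup' (fun x => dist x u) hx
    exact Finset.mem_filter.2 ⟨Finset.mem_univ x, le_trans h1 (le_max_left _ _)⟩
  have hsub_v : Bo v (rho u v k) ⊆ Bc v (max su sv) := by
    intro x hx
    have h1 : dist x v ≤ sv := by rw [hsv]; exact Finset.le_sup' (fun x => dist x v) hx
    exact Finset.mem_filter.2 ⟨Finset.mem_univ x, le_trans h1 (le_max_right _ _)⟩
  have hlt : Nc u v (max su sv) < 2 ^ k :=
    Nc_lt_of_lt_rho u v k hm0 (max_lt hsur hsvr)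
  have hge : 2 ^ k ≤ Nc u v (max su sv) := by
    refine le_min ?_ ?_
    · exact le_trans hcu (Finset.card_le_card hsub_u)
    · exact le_trans hcv (Finset.card_le_card hsub_v)
  omega

lemma scale_lb (u v : V) (k : ℕ) :
    (1 / 12 : ℝ) * (rho u v (k + 1) - rho u v k)
      ≤ ∑ S : Finset V, bw ((2:ℝ)⁻¹ ^ (k + 1)) S * |dS u S - dS v S| := by
  set p : ℝ := (2:ℝ)⁻¹ ^ (k + 1) with hpdef
  have hp0 : 0 < p := by positivity
  have hp_half : p ≤ 1 / 2 := by
    rw [hpdef]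
    calc (2:ℝ)⁻¹ ^ (k+1) ≤ (2:ℝ)⁻¹ ^ 1 :=
          pow_le_pow_of_le_one (by norm_num) (by norm_num) (by omega)
      _ = 1 / 2 := by norm_num
  have hp1 : p ≤ 1 := by linarith
  have hRHS0 : (0:ℝ) ≤ ∑ S : Finset V, bw p S * |dS u S - dS v S| :=
    Finset.sum_nonneg fun S _ => mul_nonneg (bw_nonneg hp0.le hp1 S) (abs_nonneg _)
  rcases le_or_gt (rho u v (k+1)) (rho u v k) with hle | hlt
  · calc (1/12 : ℝ) * (rho u v (k+1) - rho u v k) ≤ 0 := by nlinarith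
      _ ≤ _ := hRHS0
  set r0 := rho u v k with hr0def
  set r1 := rho u v (k+1) with hr1def
  have hr1_pos : 0 < r1 := lt_of_le_of_lt (rho_nonneg u v k) hlt
  have hr1_half : r1 ≤ dist u v / 2 := rho_le_half u v (k+1)
  have hr0_half : r0 < dist u v / 2 := lt_of_lt_of_le hlt hr1_half
  have hNc0 : 2 ^ k ≤ Nc u v r0 := by
    rcases rho_spec u v k with h | h
    · exfalso; rw [← hr0def] at h; linarith
    · exact h
  -- pick the center with small open ball at radius r1
  have hopen := open_small u v (k+1) hr1_pos
  -- key argument, symmetric in the two centers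
  have key : ∀ w w' : V, ((w = u ∧ w' = v) ∨ (w = v ∧ w' = u)) →
      (Bo w r1).card < 2 ^ (k+1) →
      (1/12 : ℝ) * (r1 - r0) ≤ ∑ S : Finset V, bw p S * |dS u S - dS v S| := by
    intro w w' hww' hBsmall
    set A := Bc w' r0 with hA
    set B := Bo w r1 with hB
    have hdww' : dist w w' = dist u v := by
      rcases hww' with ⟨h1, h2⟩ | ⟨h1, h2⟩ <;> subst h1 <;> subst h2
      · rfl
      · exact dist_comm _ _
    have hAcard : 2 ^ k ≤ A.card := by
      rcases hww' with ⟨h1, h2⟩ | ⟨h1, h2⟩ <;> subst h1 <;> subst h2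
      · exact le_trans hNc0 (min_le_right _ _)
      · exact le_trans hNc0 (min_le_left _ _)
    have hdisj : Disjoint A B := by
      rw [Finset.disjoint_left]
      intro x hxA hxB
      have h1 : dist x w' ≤ r0 := (Finset.mem_filter.1 hxA).2
      have h2 : dist x w < r1 := (Finset.mem_filter.1 hxB).2
      have h3 := dist_triangle w x w'
      rw [hdww', dist_comm w x] at h3
      linarith
    -- pointwise bound on the event
    have hpoint : ∀ S : Finset V,
        (if (S ∩ A).Nonempty ∧ Disjoint S B then bw p S else 0) * (r1 - r0)
          ≤ bw p S * |dS u S - dS v S| := by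
      intro S
      by_cases hev : (S ∩ A).Nonempty ∧ Disjoint S B
      · rw [if_pos hev]
        obtain ⟨⟨a, ha⟩, hmiss⟩ := hev
        have haS : a ∈ S := (Finset.mem_inter.1 ha).1
        have haA : a ∈ A := (Finset.mem_inter.1 ha).2
        have hSne : S.Nonempty := ⟨a, haS⟩
        have h1 : dS w' S ≤ r0 := by
          refine le_trans (dS_le w' haS) ?_
          have := (Finset.mem_filter.1 haA).2
          rwa [dist_comm]
        have h2 : r1 ≤ dS w S := by
          refine le_dS w hSne fun y hy => ?_
          have hyB : y ∉ B := Finset.disjoint_left.1 hmiss hy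
          have : ¬ dist y w < r1 := fun hc =>
            hyB (Finset.mem_filter.2 ⟨Finset.mem_univ y, hc⟩)
          rw [dist_comm]; linarith
        have habs : |dS u S - dS v S| = |dS w S - dS w' S| := by
          rcases hww' with ⟨hw1, hw2⟩ | ⟨hw1, hw2⟩
          · rw [hw1, hw2]
          · rw [hw1, hw2]; exact abs_sub_comm _ _
        have h3 : r1 - r0 ≤ |dS u S - dS v S| := by
          rw [habs]
          calc r1 - r0 ≤ dS w S - dS w' S := by linarith
            _ ≤ |dS w S - dS w' S| := le_abs_self _
        exact mul_le_mul_of_nonneg_left h3 (bw_nonneg hp0.le hp1 S)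
      · rw [if_neg hev, zero_mul]
        exact mul_nonneg (bw_nonneg hp0.le hp1 S) (abs_nonneg _)
    have hsum : (∑ S : Finset V, (if (S ∩ A).Nonempty ∧ Disjoint S B then bw p S else 0))
          * (r1 - r0) ≤ ∑ S : Finset V, bw p S * |dS u S - dS v S| := by
      rw [Finset.sum_mul]
      exact Finset.sum_le_sum fun S _ => hpoint S
    rw [sum_bw_event p hdisj] at hsum
    -- probability lower bound
    set q : ℝ := 1 - p with hq
    have hq0 : 0 ≤ q := by rw [hq]; linarith
    have hq1 : q ≤ 1 := by rw [hq]; linarith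
    have hcast : ((2:ℝ) ^ k) * p = 1 / 2 := by
      rw [hpdef, pow_succ]
      have h2k : (2:ℝ) ^ k * (2:ℝ)⁻¹ ^ k = 1 := by
        rw [← mul_pow]; norm_num
      calc (2:ℝ)^k * ((2:ℝ)⁻¹^k * 2⁻¹) = ((2:ℝ)^k * (2:ℝ)⁻¹^k) * 2⁻¹ := by ring
        _ = 1 / 2 := by rw [h2k]; norm_num
    have hhalf : (1/2 : ℝ) ≤ q ^ (2 ^ k) := by
      have := one_add_mul_le_pow (a := -p) (by linarith) (2 ^ k)
      have hc : (1:ℝ) + (2^k : ℕ) * (-p) = 1/2 := by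
        push_cast
        rw [mul_neg]
        rw [hcast]
        norm_num
      rw [hc] at this
      calc (1/2:ℝ) ≤ (1 + -p) ^ (2^k) := this
        _ = q ^ (2^k) := by rw [hq]; ring_nf
    have hq_quarter : (1/4 : ℝ) ≤ q ^ B.card := by
      have h1 : q ^ B.card ≥ q ^ (2 ^ (k+1)) :=
        pow_le_pow_of_le_one hq0 hq1 (le_of_lt hBsmall)
      have h2 : q ^ (2 ^ (k+1)) = (q ^ (2^k)) ^ 2 := by
        rw [← pow_mul, pow_succ]
      have h3 : (1/2:ℝ)^2 ≤ (q ^ (2^k))^2 := by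
        apply pow_le_pow_left₀ (by norm_num) hhalf
      rw [h2] at h1
      calc (1/4:ℝ) = (1/2:ℝ)^2 := by norm_num
        _ ≤ (q ^ (2^k))^2 := h3
        _ ≤ q ^ B.card := h1
    have hq_A : q ^ A.card ≤ 2/3 := by
      have h1 : q ^ A.card ≤ q ^ (2 ^ k) := pow_le_pow_of_le_one hq0 hq1 hAcard
      have h32 : (3/2 : ℝ) ≤ (1 + p) ^ (2 ^ k) := by
        have := one_add_mul_le_pow (a := p) (by linarith) (2 ^ k)
        have hc : (1:ℝ) + (2^k : ℕ) * p = 3/2 := by push_cast; rw [hcast]; norm_num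
        rw [hc] at this; exact this
      have hprod : q ^ (2^k) * (1 + p) ^ (2^k) ≤ 1 := by
        rw [← mul_pow]
        apply pow_le_one₀
        · nlinarith
        · nlinarith
      have hq2k : q ^ (2^k) ≤ 2/3 := by nlinarith [pow_nonneg hq0 (2^k)]
      linarith
    have hprob : (1/12 : ℝ) ≤ q ^ B.card - q ^ (A.card + B.card) := by
      have hsplit : q ^ (A.card + B.card) = q ^ A.card * q ^ B.card := by
        rw [pow_add]
      rw [hsplit]
      have hb1 : q ^ B.card ≤ 1 := pow_le_one₀ hq0 hq1
      nlinarith [pow_nonneg hq0 B.card, pow_nonneg hq0 A.card]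
    calc (1/12 : ℝ) * (r1 - r0)
        ≤ (q ^ B.card - q ^ (A.card + B.card)) * (r1 - r0) :=
          mul_le_mul_of_nonneg_right hprob (by linarith)
      _ ≤ _ := hsum
  rcases hopen with h | h
  · exact key u v (Or.inl ⟨rfl, rfl⟩) h
  · exact key v u (Or.inr ⟨rfl, rfl⟩) h

lemma pair_lb (u v : V) :
    dist u v ≤ 24 * ∑ k ∈ Finset.range (Nat.log 2 (Fintype.card V) + 1),
      ∑ S : Finset V, bw ((2:ℝ)⁻¹ ^ (k + 1)) S * |dS u S - dS v S| := by
  set T := Nat.log 2 (Fintype.card V) + 1 with hT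
  have hstep : ∀ k ∈ Finset.range T,
      (1/12 : ℝ) * (rho u v (k+1) - rho u v k)
        ≤ ∑ S : Finset V, bw ((2:ℝ)⁻¹ ^ (k + 1)) S * |dS u S - dS v S| :=
    fun k _ => scale_lb u v k
  have htel : ∑ k ∈ Finset.range T, (1/12 : ℝ) * (rho u v (k+1) - rho u v k)
      = 1/12 * (rho u v T - rho u v 0) := by
    rw [← Finset.mul_sum, Finset.sum_range_sub (fun k => rho u v k)]
  have hcard : Fintype.card V < 2 ^ T := Nat.lt_pow_succ_log_self (by norm_num) _
  have htop : rho u v T = dist u v / 2 := rho_top u v hcard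
  have hzero : rho u v 0 = 0 := rho_zero u v
  have := Finset.sum_le_sum hstep
  rw [htel, htop, hzero] at this
  linarith

lemma pair_ub (u v : V) (T : ℕ) :
    ∑ k ∈ Finset.range T, ∑ S : Finset V, bw ((2:ℝ)⁻¹ ^ (k + 1)) S * |dS u S - dS v S|
      ≤ T * dist u v := by
  have hterm : ∀ k ∈ Finset.range T,
      ∑ S : Finset V, bw ((2:ℝ)⁻¹ ^ (k + 1)) S * |dS u S - dS v S| ≤ dist u v := by
    intro k _
    have hp0 : (0:ℝ) ≤ (2:ℝ)⁻¹ ^ (k+1) := by positivity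
    have hp1 : ((2:ℝ)⁻¹) ^ (k+1) ≤ 1 := pow_le_one₀ (by norm_num) (by norm_num)
    calc ∑ S : Finset V, bw ((2:ℝ)⁻¹ ^ (k + 1)) S * |dS u S - dS v S|
        ≤ ∑ S : Finset V, bw ((2:ℝ)⁻¹ ^ (k + 1)) S * dist u v :=
          Finset.sum_le_sum fun S _ =>
            mul_le_mul_of_nonneg_left (abs_dS_sub_le u v S) (bw_nonneg hp0 hp1 S)
      _ = (∑ S : Finset V, bw ((2:ℝ)⁻¹ ^ (k + 1)) S) * dist u v := by
          rw [Finset.sum_mul]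
      _ = dist u v := by rw [sum_bw_one]; ring
  calc ∑ k ∈ Finset.range T, ∑ S : Finset V, bw ((2:ℝ)⁻¹ ^ (k + 1)) S * |dS u S - dS v S|
      ≤ ∑ _k ∈ Finset.range T, dist u v := Finset.sum_le_sum hterm
    _ = T * dist u v := by rw [Finset.sum_const, Finset.card_range, nsmul_eq_mul]

end BourgainAux

open BourgainAux in
/-- Bourgain's theorem: there is a universal constant `C` such that every finite metric space
`(V, d)` with `n ≥ 2` points admits, for some `m`, a map `f : V → (ℝ^m, ℓ1)` with
`d(v1, v2) ≤ ‖f v1 − f v2‖₁ ≤ C · log n · d(v1, v2)` for all `v1, v2`. -/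
theorem bourgain_l1_embedding :
    ∃ C : ℝ, 0 < C ∧
      ∀ (V : Type) [Fintype V] [MetricSpace V], 2 ≤ Fintype.card V →
        ∃ (m : ℕ) (f : V → (Fin m → ℝ)),
          ∀ v1 v2 : V,
            dist v1 v2 ≤ ∑ i, |f v1 i - f v2 i| ∧
            ∑ i, |f v1 i - f v2 i| ≤ C * Real.log (Fintype.card V) * dist v1 v2 := by
  classical
  refine ⟨48 / Real.log 2, div_pos (by norm_num) (Real.log_pos one_lt_two), ?_⟩
  intro V _ _ hV
  set n := Fintype.card V with hn
  set T := Nat.log 2 n + 1 with hT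
  set e := Fintype.equivFin (Fin T × Finset V) with he
  set F : V → (Fin T × Finset V) → ℝ :=
    fun x js => 24 * (bw ((2:ℝ)⁻¹ ^ ((js.1 : ℕ) + 1)) js.2 * dS x js.2) with hF
  refine ⟨Fintype.card (Fin T × Finset V), fun x i => F x (e.symm i), ?_⟩
  have key : ∀ x y : V, ∑ i, |F x (e.symm i) - F y (e.symm i)|
      = 24 * ∑ k ∈ Finset.range T,
          ∑ S : Finset V, bw ((2:ℝ)⁻¹ ^ (k + 1)) S * |dS x S - dS y S| := by
    intro x y
    have h1 : ∑ i, |F x (e.symm i) - F y (e.symm i)|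
        = ∑ js : Fin T × Finset V, |F x js - F y js| :=
      Equiv.sum_comp e.symm (fun js => |F x js - F y js|)
    rw [h1, Fintype.sum_prod_type, Finset.mul_sum,
      ← Fin.sum_univ_eq_sum_range (fun k =>
        24 * ∑ S : Finset V, bw ((2:ℝ)⁻¹ ^ (k + 1)) S * |dS x S - dS y S|) T]
    refine Finset.sum_congr rfl fun j _ => ?_
    rw [Finset.mul_sum]
    refine Finset.sum_congr rfl fun S _ => ?_
    have hp0 : (0:ℝ) ≤ (2:ℝ)⁻¹ ^ ((j : ℕ)+1) := by positivity
    have hp1 : ((2:ℝ)⁻¹) ^ ((j : ℕ)+1) ≤ 1 := pow_le_one₀ (by norm_num) (by norm_num)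
    have hw : (0:ℝ) ≤ bw ((2:ℝ)⁻¹ ^ ((j : ℕ) + 1)) S := bw_nonneg hp0 hp1 S
    show |24 * (bw ((2:ℝ)⁻¹ ^ ((j : ℕ) + 1)) S * dS x S)
        - 24 * (bw ((2:ℝ)⁻¹ ^ ((j : ℕ) + 1)) S * dS y S)|
      = 24 * (bw ((2:ℝ)⁻¹ ^ ((j : ℕ) + 1)) S * |dS x S - dS y S|)
    rw [show (24:ℝ) * (bw ((2:ℝ)⁻¹ ^ ((j : ℕ) + 1)) S * dS x S)
        - 24 * (bw ((2:ℝ)⁻¹ ^ ((j : ℕ) + 1)) S * dS y S)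
      = (24 * bw ((2:ℝ)⁻¹ ^ ((j : ℕ) + 1)) S) * (dS x S - dS y S) from by ring]
    rw [abs_mul, abs_of_nonneg (by linarith : (0:ℝ) ≤ 24 * bw ((2:ℝ)⁻¹ ^ ((j : ℕ) + 1)) S)]
    ring
  intro v1 v2
  constructor
  · rw [key v1 v2]
    exact pair_lb v1 v2
  · rw [key v1 v2]
    have hub := pair_ub v1 v2 T
    have hTlog : (T : ℝ) * Real.log 2 ≤ 2 * Real.log n := by
      have hn0 : n ≠ 0 := by omega
      have hpow : (2:ℝ) ^ (Nat.log 2 n) ≤ n := by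
        have := Nat.pow_log_le_self 2 hn0
        exact_mod_cast this
      have hlog1 : (Nat.log 2 n : ℝ) * Real.log 2 ≤ Real.log n := by
        rw [← Real.log_pow]
        apply Real.log_le_log (by positivity) hpow
      have hlog2 : Real.log 2 ≤ Real.log n := by
        apply Real.log_le_log (by norm_num)
        exact_mod_cast hV
      rw [hT]
      push_cast
      linarith
    have hD : (0:ℝ) ≤ dist v1 v2 := dist_nonneg
    have hlog2pos : (0:ℝ) < Real.log 2 := Real.log_pos one_lt_two
    have h24T : (24:ℝ) * T ≤ 48 / Real.log 2 * Real.log n := by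
      rw [div_mul_eq_mul_div, le_div_iff₀ hlog2pos]
      nlinarith
    calc (24:ℝ) * ∑ k ∈ Finset.range T,
          ∑ S : Finset V, bw ((2:ℝ)⁻¹ ^ (k + 1)) S * |dS v1 S - dS v2 S|
        ≤ 24 * (T * dist v1 v2) := by
          have h24 : (0:ℝ) ≤ 24 := by norm_num
          exact mul_le_mul_of_nonneg_left hub h24
      _ = (24 * T) * dist v1 v2 := by ring
      _ ≤ 48 / Real.log 2 * Real.log n * dist v1 v2 :=
          mul_le_mul_of_nonneg_right h24T hD
end
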